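/- arXiv:2501.07829 — 3 statements merged into one kernel-verified Lean document; each statement's English description precedes it below -/
import Mathlib

section
/- Let J be a monomial ideal of Borel type in S = k[x_1,...,x_n] with dim(S/J) ≥ n − r, J_1 = (J ∩ k[x_1,...,x_r])S, J_2 = J : (x_{r+1}···x_n)^∞. Then the following are equivalent: (a) Π_r(J_2) = Π_r(J) + (u) for some monomial u ∈ (Π_r(J) : m(r)) \ Π_r(J), where m(r) = (x_1,...,x_r); (b) rank_{k[x_{r+1},...,x_n]}(J_2/J_1) = 1. -/
open MvPolynomial Finsupp Module

namespace Paper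

variable {k : Type*} [Field k] {n : ℕ}

/-- `J` is a monomial ideal: generated by a set of monomials. -/
def IsMonomialIdeal (J : Ideal (MvPolynomial (Fin n) k)) : Prop :=
  ∃ G : Set (Fin n →₀ ℕ),
    J = Ideal.span ((fun d => (monomial d (1:k) : MvPolynomial (Fin n) k)) '' G)

/-- The Borel-type condition: for `i < j` and a monomial `x^d ∈ J` with `x_j ∣ x^d`,
some `x_i^s · x^d / x_j` lies in `J`. -/
def BorelCond (J : Ideal (MvPolynomial (Fin n) k)) : Prop :=
  ∀ i j : Fin n, i < j → ∀ d : Fin n →₀ ℕ,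
    (monomial d (1:k) : MvPolynomial (Fin n) k) ∈ J → d j ≠ 0 →
    ∃ s : ℕ,
      (monomial (d + Finsupp.single i s - Finsupp.single j 1) (1:k) :
        MvPolynomial (Fin n) k) ∈ J

/-- `J` is a monomial ideal of Borel type. -/
def IsBorelType (J : Ideal (MvPolynomial (Fin n) k)) : Prop :=
  IsMonomialIdeal J ∧ BorelCond J

/-- The saturation `J : I^∞`. -/
noncomputable def sat (J I : Ideal (MvPolynomial (Fin n) k)) : Ideal (MvPolynomial (Fin n) k) :=
  ⨆ m : ℕ, Submodule.colon J ((I ^ m) : Ideal (MvPolynomial (Fin n) k))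

/-- The product of the variables with (0-based) index `≥ r`, i.e. `x_{r+1} ⋯ x_n`. -/
noncomputable def tailProd (k : Type*) [Field k] (n r : ℕ) : MvPolynomial (Fin n) k :=
  ∏ i ∈ Finset.univ.filter (fun i : Fin n => r ≤ (i : ℕ)), X i

/-- `Φ_r(J) = J : (x_{r+1} ⋯ x_n)^∞`. -/
noncomputable def Phi (r : ℕ) (J : Ideal (MvPolynomial (Fin n) k)) :
    Ideal (MvPolynomial (Fin n) k) :=
  sat J (Ideal.span {tailProd k n r})

/-- The projection `Π_r : k[x_1,…,x_n] → k[x_1,…,x_r]` sending `x_{r+1},…,x_n` to `0`. -/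
noncomputable def projDown (k : Type*) [Field k] (n r : ℕ) :
    MvPolynomial (Fin n) k →ₐ[k] MvPolynomial (Fin r) k :=
  aeval (fun i : Fin n => if h : (i : ℕ) < r then X ⟨i, h⟩ else 0)

/-- `Π_r(J)`, the image ideal of `J` in `k[x_1,…,x_r]`. -/
noncomputable def PiIdeal (r : ℕ) (J : Ideal (MvPolynomial (Fin n) k)) :
    Ideal (MvPolynomial (Fin r) k) :=
  J.map (projDown k n r).toRingHom

/-- The exponent `d` is a minimal generator of the monomial ideal `J`. -/
def IsMinGen (J : Ideal (MvPolynomial (Fin n) k)) (d : Fin n →₀ ℕ) : Prop :=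
  (monomial d (1:k) : MvPolynomial (Fin n) k) ∈ J ∧
    ∀ d' : Fin n →₀ ℕ, d' ≤ d →
      (monomial d' (1:k) : MvPolynomial (Fin n) k) ∈ J → d' = d

/-- The leading exponent of a polynomial with respect to a monomial order. -/
noncomputable def leadExp (m : MonomialOrder (Fin n)) (f : MvPolynomial (Fin n) k) :
    Fin n →₀ ℕ :=
  m.toSyn.symm (f.support.sup fun d => m.toSyn d)

/-- The initial ideal of `P` with respect to the monomial order `m`. -/
noncomputable def initialIdeal (m : MonomialOrder (Fin n)) (P : Ideal (MvPolynomial (Fin n) k)) :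
    Ideal (MvPolynomial (Fin n) k) :=
  Ideal.span {g | ∃ f ∈ P, f ≠ 0 ∧ g = (monomial (leadExp m f) (1:k) : MvPolynomial (Fin n) k)}

/-- A homogeneous ideal: closed under taking homogeneous components. -/
def IsHomogIdeal (P : Ideal (MvPolynomial (Fin n) k)) : Prop :=
  ∀ f ∈ P, ∀ i : ℕ, homogeneousComponent i f ∈ P

/-- The ideal generated by the variables `x_1, …, x_{i+1}` (0-based indices `≤ i`). -/
noncomputable def varIdealLe (k : Type*) [Field k] {n : ℕ} (i : Fin n) :
    Ideal (MvPolynomial (Fin n) k) :=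
  Ideal.span ((fun j : Fin n => (X j : MvPolynomial (Fin n) k)) '' {j | j ≤ i})

/-- The Hilbert series of `S/I` as a power series with integer coefficients. -/
noncomputable def hilb {N : ℕ} (I : Ideal (MvPolynomial (Fin N) k)) : PowerSeries ℤ :=
  PowerSeries.mk fun i =>
    (Module.finrank k (Submodule.map (Ideal.Quotient.mkₐ k I).toLinearMap
      (homogeneousSubmodule (Fin N) k i)) : ℤ)

/-- The `i`-th Hilbert coefficient read off from the numerator polynomial `q`:
the coefficient of `(t-1)^i` in `q`. -/
noncomputable def hc (q : Polynomial ℤ) (i : ℕ) : ℤ :=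
  (Polynomial.taylor 1 q).coeff i

/-- The Krull dimension of the quotient ring `S/I`. -/
noncomputable def qdim {N : ℕ} (I : Ideal (MvPolynomial (Fin N) k)) : WithBot (WithTop ℕ) :=
  ringKrullDim (MvPolynomial (Fin N) k ⧸ I)

/-- The embedding `k[x_1,…,x_r] → k[x_1,…,x_n]`. -/
noncomputable def inclUp (k : Type*) [Field k] {r n : ℕ} (h : r ≤ n) :
    MvPolynomial (Fin r) k →ₐ[k] MvPolynomial (Fin n) k :=
  rename (Fin.castLE h)

/-- The embedding of variables for the tail subring `k[x_{r+1},…,x_n]`. -/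
def tailEmb (n r : ℕ) (h : r ≤ n) : Fin (n - r) → Fin n :=
  fun j => ⟨r + j.1, by omega⟩

/-- The inclusion `k[x_{r+1},…,x_n] → k[x_1,…,x_n]` as a ring hom. -/
noncomputable def tailIncl (k : Type*) [Field k] {n : ℕ} (r : ℕ) (h : r ≤ n) :
    MvPolynomial (Fin (n - r)) k →+* MvPolynomial (Fin n) k :=
  (rename (tailEmb n r h)).toRingHom

/-- `J₁ = (J ∩ k[x_1,…,x_r])S`: the ideal generated by the monomials of `J`
lying in `k[x_1,…,x_r]`. -/
noncomputable def Jone (r : ℕ) (J : Ideal (MvPolynomial (Fin n) k)) :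
    Ideal (MvPolynomial (Fin n) k) :=
  Ideal.span {g | ∃ d : Fin n →₀ ℕ, (∀ i : Fin n, r ≤ (i : ℕ) → d i = 0) ∧
    (monomial d (1:k) : MvPolynomial (Fin n) k) ∈ J ∧
    g = (monomial d (1:k) : MvPolynomial (Fin n) k)}

/-- The quotient module `J₂/J₁` for ideals `J₁ ≤ J₂`. -/
abbrev quotMod (J₁ J₂ : Ideal (MvPolynomial (Fin n) k)) :=
  (J₂ : Submodule (MvPolynomial (Fin n) k) (MvPolynomial (Fin n) k)) ⧸
    (Submodule.comap
      (J₂ : Submodule (MvPolynomial (Fin n) k) (MvPolynomial (Fin n) k)).subtype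
      (J₁ : Submodule (MvPolynomial (Fin n) k) (MvPolynomial (Fin n) k)))

/-- `J₂/J₁` as a module over `k[x_{r+1},…,x_n]`. -/
noncomputable def quotModTail (r : ℕ) (h : r ≤ n) (J₁ J₂ : Ideal (MvPolynomial (Fin n) k)) :
    Module (MvPolynomial (Fin (n - r)) k) (quotMod J₁ J₂) :=
  Module.compHom _ (tailIncl k r h)

/-- The degrevlex property of a monomial order: compare total degrees first, and break
ties by the *last* variable in which the exponents differ, where *larger* exponent
means *smaller* monomial. -/
def IsDegRevLex (m : MonomialOrder (Fin n)) : Prop :=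
  ∀ a b : Fin n →₀ ℕ, (m.toSyn a < m.toSyn b) ↔
    ((a.sum fun _ e => e) < (b.sum fun _ e => e) ∨
      ((a.sum fun _ e => e) = (b.sum fun _ e => e) ∧
        ∃ i : Fin n, b i < a i ∧ ∀ j : Fin n, i < j → a j = b j))

end Paper

open Paper MvPolynomial

namespace Stmt12Aux

open Paper MvPolynomial Finsupp

variable {k : Type*} [Field k] {σ : Type*}

/-- Monomial-closed ideals -/
def MonClosed (P : Ideal (MvPolynomial σ k)) : Prop :=
  ∀ f ∈ P, ∀ a ∈ f.support, (monomial a (1:k)) ∈ P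

lemma monClosed_span (G : Set (σ →₀ ℕ)) :
    MonClosed (Ideal.span ((fun d => (monomial d (1:k) : MvPolynomial σ k)) '' G)) := by
  classical
  intro f hf a ha
  rw [mem_ideal_span_monomial_image] at hf ⊢
  intro b hb
  rw [support_monomial, if_neg one_ne_zero, Finset.mem_singleton] at hb
  exact hb ▸ hf a ha

lemma monomial_mem_mono {P : Ideal (MvPolynomial σ k)} {d a : σ →₀ ℕ} (h : d ≤ a)
    (hd : (monomial d (1:k)) ∈ P) : (monomial a (1:k)) ∈ P := by
  have he : (monomial a (1:k) : MvPolynomial σ k) = monomial (a - d) 1 * monomial d 1 := by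
    rw [monomial_mul, one_mul, tsub_add_cancel_of_le h]
  rw [he]; exact Ideal.mul_mem_left _ _ hd

lemma monomial_eq_C_mul (a : σ →₀ ℕ) (c : k) :
    (monomial a c : MvPolynomial σ k) = C c * monomial a 1 := by
  rw [C_mul_monomial, mul_one]

lemma MonClosed.mem_iff {P : Ideal (MvPolynomial σ k)} (hP : MonClosed P)
    {f : MvPolynomial σ k} :
    f ∈ P ↔ ∀ a ∈ f.support, (monomial a (1:k)) ∈ P := by
  refine ⟨fun hf => hP f hf, fun h => ?_⟩
  nth_rewrite 1 [f.as_sum]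
  exact Ideal.sum_mem _ fun a ha => by
    rw [monomial_eq_C_mul]; exact Ideal.mul_mem_left _ _ (h a ha)

lemma mem_sup_span_monomial {P : Ideal (MvPolynomial σ k)} (hP : MonClosed P) {u w : σ →₀ ℕ}
    (h : (monomial w (1:k)) ∈ P ⊔ Ideal.span {(monomial u (1:k) : MvPolynomial σ k)}) :
    (monomial w (1:k)) ∈ P ∨ u ≤ w := by
  classical
  by_cases hle : u ≤ w
  · exact Or.inr hle
  left
  obtain ⟨p, hp, q, hq, hpq⟩ := Submodule.mem_sup.mp h
  obtain ⟨s, rfl⟩ := Ideal.mem_span_singleton'.mp hq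
  apply hP p hp
  rw [MvPolynomial.mem_support_iff]
  have hcq : coeff w (s * monomial u (1:k)) = 0 := by rw [coeff_mul_monomial', if_neg hle]
  have h2 := congrArg (coeff w) hpq
  rw [coeff_add, hcq, add_zero, coeff_monomial, if_pos rfl] at h2
  rw [h2]; exact one_ne_zero

lemma monomial_mul_X (u : σ →₀ ℕ) (j : σ) :
    (monomial u (1:k) : MvPolynomial σ k) * X j = monomial (u + Finsupp.single j 1) 1 := by
  rw [show (X j : MvPolynomial σ k) = monomial (Finsupp.single j 1) 1 from by
    rw [← X_pow_eq_monomial, pow_one], monomial_mul, mul_one]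

lemma prod_monomial {ι : Type*} (s : Finset ι) (f : ι → (σ →₀ ℕ)) :
    (∏ i ∈ s, (monomial (f i) (1:k) : MvPolynomial σ k)) = monomial (∑ i ∈ s, f i) 1 := by
  classical
  induction s using Finset.induction_on with
  | empty => simp
  | insert _ _ h ih => rw [Finset.prod_insert h, ih, monomial_mul, one_mul, Finset.sum_insert h]

variable {n r : ℕ}

/-- the exponent of `x_{r+1} ⋯ x_n` -/
noncomputable def eF (n r : ℕ) : Fin n →₀ ℕ :=
  ∑ i ∈ Finset.univ.filter (fun i : Fin n => r ≤ (i : ℕ)), Finsupp.single i 1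

lemma eF_apply (i : Fin n) : eF n r i = if r ≤ (i : ℕ) then 1 else 0 := by
  classical
  rw [eF, Finsupp.finset_sum_apply]
  rw [Finset.sum_congr rfl (fun j _ => Finsupp.single_apply (a := j) (b := (1:ℕ)))]
  rw [Finset.sum_ite_eq' (Finset.univ.filter (fun i : Fin n => r ≤ (i : ℕ))) i (fun _ => (1:ℕ))]
  simp

lemma tailProd_eq : tailProd k n r = monomial (eF n r) 1 := by
  rw [tailProd, eF, ← prod_monomial]
  exact Finset.prod_congr rfl fun i _ => by rw [← X_pow_eq_monomial, pow_one]

lemma tailProd_pow (m : ℕ) : (tailProd k n r) ^ m = monomial (m • eF n r) 1 := by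
  rw [tailProd_eq, monomial_pow, one_pow]

lemma mem_Phi {J : Ideal (MvPolynomial (Fin n) k)} {f : MvPolynomial (Fin n) k} :
    f ∈ Phi r J ↔ ∃ m : ℕ, f * (tailProd k n r) ^ m ∈ J := by
  have hdir : Directed (· ≤ ·)
      (fun m : ℕ => Submodule.colon J (((Ideal.span {tailProd k n r}) ^ m : Ideal (MvPolynomial (Fin n) k)))) :=
    (monotone_nat_of_le_succ fun m => Submodule.colon_mono le_rfl
      (show ((Ideal.span {tailProd k n r} ^ (m + 1) : Ideal (MvPolynomial (Fin n) k)) :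
        Set (MvPolynomial (Fin n) k)) ⊆ ((Ideal.span {tailProd k n r} ^ m : Ideal (MvPolynomial (Fin n) k)))
        from SetLike.coe_subset_coe.mpr (Ideal.pow_le_pow_right (Nat.le_succ m)))).directed_le
  rw [Phi, sat, Submodule.mem_iSup_of_directed _ hdir]
  exact exists_congr fun m => by rw [Ideal.span_singleton_pow, Ideal.mem_colon_span_singleton]

lemma le_Phi (J : Ideal (MvPolynomial (Fin n) k)) : J ≤ Phi r J := fun f hf =>
  mem_Phi.mpr ⟨0, by simpa using hf⟩

lemma MonClosed.phi {J : Ideal (MvPolynomial (Fin n) k)} (hJ : MonClosed J) :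
    MonClosed (Phi r J) := by
  intro f hf a ha
  obtain ⟨m, hm⟩ := mem_Phi.mp hf
  refine mem_Phi.mpr ⟨m, ?_⟩
  rw [tailProd_pow, monomial_mul, one_mul]
  have hsupp : a + m • eF n r ∈ (f * (tailProd k n r) ^ m).support := by
    rw [MvPolynomial.mem_support_iff, tailProd_pow, coeff_mul_monomial, mul_one]
    exact MvPolynomial.mem_support_iff.mp ha
  exact hJ _ hm _ hsupp

lemma apply_le_sum (a : Fin n →₀ ℕ) (i : Fin n) : a i ≤ a.sum fun _ x => x := by
  classical
  by_cases h : i ∈ a.support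
  · exact Finset.single_le_sum (fun _ _ => Nat.zero_le _) h
  · rw [Finsupp.notMem_support_iff.mp h]; exact Nat.zero_le _

section Emb

variable (hrn : r ≤ n)

noncomputable def embF (u : Fin r →₀ ℕ) : Fin n →₀ ℕ :=
  Finsupp.mapDomain (Fin.castLE hrn) u

noncomputable def tembF (b : Fin (n - r) →₀ ℕ) : Fin n →₀ ℕ :=
  Finsupp.mapDomain (tailEmb n r hrn) b

lemma tailEmb_inj : Function.Injective (tailEmb n r hrn) := fun a b h => by
  have h2 := congrArg Fin.val h
  simp only [tailEmb] at h2
  exact Fin.ext (by omega)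

lemma embF_apply (u : Fin r →₀ ℕ) (i : Fin n) :
    embF hrn u i = if h : (i : ℕ) < r then u ⟨i, h⟩ else 0 := by
  split_ifs with h
  · exact Finsupp.mapDomain_apply (Fin.castLE_injective hrn) u ⟨(i : ℕ), h⟩
  · exact Finsupp.mapDomain_notin_range _ _ (by
      rintro ⟨j, rfl⟩; exact h j.isLt)

lemma tembF_apply (b : Fin (n - r) →₀ ℕ) (i : Fin n) :
    tembF hrn b i = if h : r ≤ (i : ℕ) then b ⟨(i : ℕ) - r, by have := i.isLt; omega⟩ else 0 := by
  split_ifs with h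
  · obtain ⟨j, rfl⟩ : ∃ j, tailEmb n r hrn j = i :=
      ⟨⟨(i : ℕ) - r, by have := i.isLt; omega⟩, Fin.ext (by simp [tailEmb]; omega)⟩
    unfold tembF
    rw [Finsupp.mapDomain_apply (tailEmb_inj hrn)]
    congr 1
    exact Fin.ext (by simp [tailEmb])
  · exact Finsupp.mapDomain_notin_range _ _ (by
      rintro ⟨j, rfl⟩; exact h (Nat.le_add_right r j.1))

noncomputable def hdF (a : Fin n →₀ ℕ) : Fin r →₀ ℕ :=
  Finsupp.comapDomain (Fin.castLE hrn) a ((Fin.castLE_injective hrn).injOn)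

noncomputable def tlF (a : Fin n →₀ ℕ) : Fin (n - r) →₀ ℕ :=
  Finsupp.comapDomain (tailEmb n r hrn) a ((tailEmb_inj hrn).injOn)

lemma hdF_apply (a : Fin n →₀ ℕ) (j : Fin r) : hdF hrn a j = a (Fin.castLE hrn j) := rfl

lemma tlF_apply (a : Fin n →₀ ℕ) (j : Fin (n - r)) : tlF hrn a j = a (tailEmb n r hrn j) := rfl

lemma hd_add_tl (a : Fin n →₀ ℕ) : embF hrn (hdF hrn a) + tembF hrn (tlF hrn a) = a := by
  ext i
  rw [Finsupp.add_apply, embF_apply, tembF_apply]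
  by_cases h : (i : ℕ) < r
  · rw [dif_pos h, dif_neg (by omega), add_zero, hdF_apply]
    rfl
  · rw [dif_neg h, dif_pos (by omega), zero_add, tlF_apply]
    congr 1
    exact Fin.ext (by simp [tailEmb]; omega)

lemma hdF_embF_add_tembF (w : Fin r →₀ ℕ) (b : Fin (n - r) →₀ ℕ) :
    hdF hrn (embF hrn w + tembF hrn b) = w := by
  ext j
  rw [hdF_apply, Finsupp.add_apply, embF_apply, tembF_apply]
  have hj : ((Fin.castLE hrn j : Fin n) : ℕ) = (j : ℕ) := rfl
  rw [dif_pos (by rw [hj]; exact j.isLt), dif_neg (by rw [hj]; have := j.isLt; omega), add_zero]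
  rfl

lemma tembF_zero : tembF hrn 0 = 0 := Finsupp.mapDomain_zero

lemma hdF_embF (w : Fin r →₀ ℕ) : hdF hrn (embF hrn w) = w := by
  have h := hdF_embF_add_tembF hrn w 0
  rwa [tembF_zero, add_zero] at h


variable {k : Type*} [Field k]

lemma projDown_comp_inclUp :
    (projDown k n r).comp (inclUp k hrn) = AlgHom.id k (MvPolynomial (Fin r) k) := by
  apply algHom_ext
  intro j
  rw [AlgHom.comp_apply, AlgHom.id_apply, inclUp, projDown]
  rw [show (rename (Fin.castLE hrn) : MvPolynomial (Fin r) k →ₐ[k] MvPolynomial (Fin n) k) (X j)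
      = X (Fin.castLE hrn j) from rename_X _ j]
  rw [aeval_X]
  rw [dif_pos (show ((Fin.castLE hrn j : Fin n) : ℕ) < r from j.isLt)]
  rfl

lemma projDown_inclUp (g : MvPolynomial (Fin r) k) :
    projDown k n r (inclUp k hrn g) = g := by
  have h := AlgHom.congr_fun (projDown_comp_inclUp hrn (k := k)) g
  simpa using h

lemma inclUp_monomial (u : Fin r →₀ ℕ) (c : k) :
    inclUp k hrn (monomial u c) = monomial (embF hrn u) c := rename_monomial _ _ _

lemma inclUp_projDown_monomial (a : Fin n →₀ ℕ) (c : k) :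
    inclUp k hrn (projDown k n r (monomial a c)) =
      if ∀ i : Fin n, r ≤ (i : ℕ) → a i = 0 then monomial a c else 0 := by
  classical
  have hco : (inclUp k hrn).comp (projDown k n r) =
      aeval (fun i : Fin n => if (i : ℕ) < r then (X i : MvPolynomial (Fin n) k) else 0) := by
    apply algHom_ext
    intro i
    rw [AlgHom.comp_apply, projDown, aeval_X, aeval_X]
    by_cases h : (i : ℕ) < r
    · rw [dif_pos h, if_pos h, inclUp]
      rw [show (rename (Fin.castLE hrn) : MvPolynomial (Fin r) k →ₐ[k] MvPolynomial (Fin n) k)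
        (X ⟨(i : ℕ), h⟩) = X (Fin.castLE hrn ⟨(i : ℕ), h⟩) from rename_X _ _]
      rfl
    · rw [dif_neg h, if_neg h, map_zero]
  have hc2 := AlgHom.congr_fun hco (monomial a c)
  rw [AlgHom.comp_apply] at hc2
  rw [hc2, aeval_monomial]
  by_cases H : ∀ i : Fin n, r ≤ (i : ℕ) → a i = 0
  · rw [if_pos H]
    have hprod : (a.prod fun i e => (if (i : ℕ) < r then (X i : MvPolynomial (Fin n) k) else 0) ^ e)
        = a.prod fun i e => (X i) ^ e := by
      apply Finsupp.prod_congr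
      intro i hi
      rw [if_pos (by
        by_contra hc
        exact (Finsupp.mem_support_iff.mp hi) (H i (by omega)))]
    rw [hprod, show (a.prod fun i e => (X i : MvPolynomial (Fin n) k) ^ e) = monomial a 1 from
      prod_X_pow_eq_monomial, algebraMap_eq, C_mul_monomial, mul_one]
  · rw [if_neg H]
    push_neg at H
    obtain ⟨i0, hi0r, hi0⟩ := H
    have hzero : (a.prod fun i e =>
        (if (i : ℕ) < r then (X i : MvPolynomial (Fin n) k) else 0) ^ e) = 0 := by
      apply Finset.prod_eq_zero (Finsupp.mem_support_iff.mpr hi0)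
      show (if (i0 : ℕ) < r then (X i0 : MvPolynomial (Fin n) k) else 0) ^ a i0 = 0
      rw [if_neg (by omega), zero_pow hi0]
    rw [hzero, mul_zero]

lemma MonClosed.mem_piIdeal {P : Ideal (MvPolynomial (Fin n) k)} (hP : MonClosed P)
    {g : MvPolynomial (Fin r) k} : g ∈ PiIdeal r P ↔ inclUp k hrn g ∈ P := by
  constructor
  · intro hg
    have hsurj : Function.Surjective (projDown k n r).toRingHom :=
      fun y => ⟨inclUp k hrn y, projDown_inclUp hrn y⟩
    obtain ⟨p, hp, hpg⟩ := (Ideal.mem_map_iff_of_surjective _ hsurj).mp hg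
    have hpg' : projDown k n r p = g := hpg
    rw [← hpg']
    have key : inclUp k hrn (projDown k n r (∑ a ∈ p.support, monomial a (coeff a p))) ∈ P := by
      rw [map_sum, map_sum]
      refine Ideal.sum_mem _ fun a ha => ?_
      rw [inclUp_projDown_monomial]
      split_ifs
      · rw [monomial_eq_C_mul]
        exact Ideal.mul_mem_left _ _ (hP p hp a ha)
      · exact Ideal.zero_mem _
    rwa [← p.as_sum] at key
  · intro h
    have hg : g = projDown k n r (inclUp k hrn g) := (projDown_inclUp hrn g).symm
    rw [hg]
    exact Ideal.mem_map_of_mem _ h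

lemma MonClosed.monomial_mem_piIdeal {P : Ideal (MvPolynomial (Fin n) k)} (hP : MonClosed P)
    {u : Fin r →₀ ℕ} :
    (monomial u (1:k) : MvPolynomial (Fin r) k) ∈ PiIdeal r P ↔
      (monomial (embF hrn u) (1:k)) ∈ P := by
  rw [hP.mem_piIdeal hrn, inclUp_monomial]

include hrn in
lemma MonClosed.piIdeal {P : Ideal (MvPolynomial (Fin n) k)} (hP : MonClosed P) :
    MonClosed (PiIdeal r P) := by
  intro f hf u hu
  rw [hP.monomial_mem_piIdeal hrn]
  have h1 : inclUp k hrn f ∈ P := (hP.mem_piIdeal hrn).mp hf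
  apply hP _ h1
  rw [MvPolynomial.mem_support_iff]
  rw [show embF hrn u = Finsupp.mapDomain (Fin.castLE hrn) u from rfl]
  rw [show inclUp k hrn f = rename (Fin.castLE hrn) f from rfl]
  rw [coeff_rename_mapDomain _ (Fin.castLE_injective hrn)]
  exact MvPolynomial.mem_support_iff.mp hu

lemma Jone_eq (J : Ideal (MvPolynomial (Fin n) k)) :
    Jone r J = Ideal.span ((fun d => (monomial d (1:k) : MvPolynomial (Fin n) k)) ''
      {d | (∀ i : Fin n, r ≤ (i : ℕ) → d i = 0) ∧ (monomial d (1:k)) ∈ J}) := by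
  rw [Jone]
  congr 1
  ext g
  simp only [Set.mem_image, Set.mem_setOf_eq]
  constructor
  · rintro ⟨d, h1, h2, rfl⟩; exact ⟨d, ⟨h1, h2⟩, rfl⟩
  · rintro ⟨d, ⟨h1, h2⟩, rfl⟩; exact ⟨d, h1, h2, rfl⟩

lemma monomial_mem_Jone {J : Ideal (MvPolynomial (Fin n) k)} {a : Fin n →₀ ℕ} :
    (monomial a (1:k)) ∈ Jone r J ↔ (monomial (embF hrn (hdF hrn a)) (1:k)) ∈ J := by
  classical
  rw [Jone_eq, mem_ideal_span_monomial_image]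
  constructor
  · intro h
    obtain ⟨d, ⟨hd0, hdJ⟩, hda⟩ := h a
      (by rw [support_monomial, if_neg one_ne_zero]; exact Finset.mem_singleton_self a)
    refine monomial_mem_mono ?_ hdJ
    rw [Finsupp.le_def]
    intro i
    rw [embF_apply]
    split_ifs with h'
    · rw [hdF_apply]
      exact Finsupp.le_def.mp hda _
    · rw [hd0 i (by omega)]
  · intro h b hb
    rw [support_monomial, if_neg one_ne_zero, Finset.mem_singleton] at hb
    rw [hb]
    refine ⟨embF hrn (hdF hrn a), ⟨⟨fun i hi => ?_, h⟩, ?_⟩⟩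
    · rw [embF_apply, dif_neg (by omega)]
    · rw [Finsupp.le_def]
      intro i
      rw [embF_apply]
      split_ifs with h'
      · rw [hdF_apply]
        exact le_of_eq rfl
      · exact Nat.zero_le _

lemma hd_mem_Phi {J : Ideal (MvPolynomial (Fin n) k)} {a : Fin n →₀ ℕ}
    (h : (monomial a (1:k)) ∈ Phi r J) :
    (monomial (embF hrn (hdF hrn a)) (1:k)) ∈ Phi r J := by
  obtain ⟨m, hm⟩ := mem_Phi.mp h
  refine mem_Phi.mpr ⟨m + a.sum fun _ x => x, ?_⟩
  rw [tailProd_pow, monomial_mul, one_mul] at hm ⊢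
  refine monomial_mem_mono ?_ hm
  rw [Finsupp.le_def]
  intro i
  rw [Finsupp.add_apply, Finsupp.add_apply, Finsupp.smul_apply, Finsupp.smul_apply,
    eF_apply, embF_apply]
  by_cases h1 : (i : ℕ) < r
  · rw [dif_pos h1, if_neg (by omega), hdF_apply]
    simp
  · rw [dif_neg h1, if_pos (by omega)]
    have hai := apply_le_sum a i
    simp only [smul_eq_mul, mul_one]
    omega


lemma tailIncl_coeff (t : MvPolynomial (Fin (n - r)) k) (b : Fin (n - r) →₀ ℕ) :
    coeff (tembF hrn b) (tailIncl k r hrn t) = coeff b t :=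
  coeff_rename_mapDomain _ (tailEmb_inj hrn) t b

lemma tailIncl_coeff_ne (t : MvPolynomial (Fin (n - r)) k) (a : Fin n →₀ ℕ)
    (h : coeff a (tailIncl k r hrn t) ≠ 0) : ∃ b, a = tembF hrn b := by
  obtain ⟨b, hb, _⟩ := coeff_rename_ne_zero _ _ _ h
  exact ⟨b, hb.symm⟩

lemma coeff_mul_embF (t : MvPolynomial (Fin (n - r)) k) (w : Fin r →₀ ℕ) (b : Fin (n - r) →₀ ℕ) :
    coeff (embF hrn w + tembF hrn b)
      (tailIncl k r hrn t * monomial (embF hrn w) (1:k)) = coeff b t := by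
  rw [add_comm, coeff_mul_monomial, tailIncl_coeff, mul_one]

lemma coeff_mul_embF_ne (t : MvPolynomial (Fin (n - r)) k) (w : Fin r →₀ ℕ) (a : Fin n →₀ ℕ)
    (h : coeff a (tailIncl k r hrn t * monomial (embF hrn w) (1:k)) ≠ 0) :
    ∃ b, a = embF hrn w + tembF hrn b := by
  rw [coeff_mul_monomial'] at h
  by_cases hle : embF hrn w ≤ a
  · rw [if_pos hle, mul_one] at h
    obtain ⟨b, hb⟩ := tailIncl_coeff_ne hrn _ _ h
    exact ⟨b, by rw [← hb, add_tsub_cancel_of_le hle]⟩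
  · rw [if_neg hle] at h
    exact absurd rfl h

include hrn in
lemma forms_disjoint {w w' : Fin r →₀ ℕ} (hne : w ≠ w') (t' : MvPolynomial (Fin (n - r)) k) :
    ∀ a : Fin n →₀ ℕ, coeff a (tailIncl k r hrn t' * monomial (embF hrn w') (1:k)) ≠ 0 →
      ¬ ∃ b, a = embF hrn w + tembF hrn b := by
  rintro a h ⟨b, hb⟩
  obtain ⟨b', hb'⟩ := coeff_mul_embF_ne hrn t' w' a h
  apply hne
  have h2 : embF hrn w + tembF hrn b = embF hrn w' + tembF hrn b' := hb ▸ hb'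
  have h3 := congrArg (hdF hrn) h2
  rwa [hdF_embF_add_tembF, hdF_embF_add_tembF] at h3

lemma ind_core {J : Ideal (MvPolynomial (Fin n) k)} (hJ1mc : MonClosed (Jone r J))
    (hJ1J2 : ∀ a : Fin n →₀ ℕ,
      (monomial a (1:k)) ∈ Jone r J ↔ (monomial (hdF hrn a) (1:k)) ∈ PiIdeal r J)
    {w : Fin r →₀ ℕ} (hw : (monomial w (1:k) : MvPolynomial (Fin r) k) ∉ PiIdeal r J)
    {t : MvPolynomial (Fin (n - r)) k} {g : MvPolynomial (Fin n) k}
    (hg : ∀ a : Fin n →₀ ℕ, coeff a g ≠ 0 → ¬ ∃ b, a = embF hrn w + tembF hrn b)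
    (hmem : tailIncl k r hrn t * monomial (embF hrn w) (1:k) + g ∈ Jone r J) : t = 0 := by
  by_contra ht
  obtain ⟨b, hb⟩ := MvPolynomial.support_nonempty.mpr ht
  set a := embF hrn w + tembF hrn b with ha
  have hga : coeff a g = 0 := by
    by_contra hcg
    exact (hg a hcg) ⟨b, rfl⟩
  have hca : coeff a (tailIncl k r hrn t * monomial (embF hrn w) (1:k) + g) = coeff b t := by
    rw [coeff_add, hga, add_zero, ha, coeff_mul_embF]
  have hmem2 : (monomial a (1:k)) ∈ Jone r J :=
    hJ1mc _ hmem a (MvPolynomial.mem_support_iff.mpr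
      (by rw [hca]; exact MvPolynomial.mem_support_iff.mp hb))
  have h4 := (hJ1J2 a).mp hmem2
  rw [ha, hdF_embF_add_tembF] at h4
  exact hw h4

lemma span_core {J : Ideal (MvPolynomial (Fin n) k)} (hJ1mc : MonClosed (Jone r J))
    (hJ2mc : MonClosed (Phi r J))
    (hJ1J2 : ∀ a : Fin n →₀ ℕ,
      (monomial a (1:k)) ∈ Jone r J ↔ (monomial (hdF hrn a) (1:k)) ∈ PiIdeal r J)
    (hI2hd : ∀ a : Fin n →₀ ℕ, (monomial a (1:k)) ∈ Phi r J →
      (monomial (hdF hrn a) (1:k)) ∈ PiIdeal r (Phi r J))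
    {u : Fin r →₀ ℕ}
    (hOnly : ∀ w2 : Fin r →₀ ℕ, (monomial w2 (1:k)) ∈ PiIdeal r (Phi r J) →
      (monomial w2 (1:k)) ∉ PiIdeal r J → w2 = u)
    {f : MvPolynomial (Fin n) k} (hf : f ∈ Phi r J) :
    ∃ t : MvPolynomial (Fin (n - r)) k,
      f - tailIncl k r hrn t * monomial (embF hrn u) (1:k) ∈ Jone r J := by
  classical
  have hinj : Set.InjOn (fun b => embF hrn u + tembF hrn b)
      ((fun b => embF hrn u + tembF hrn b) ⁻¹' ↑(f.support)) := by
    intro x _ y _ hxy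
    have h1 : tembF hrn x = tembF hrn y := by
      have := add_left_cancel hxy
      exact this
    exact Finsupp.mapDomain_injective (tailEmb_inj hrn) h1
  set t : MvPolynomial (Fin (n - r)) k :=
    AddMonoidAlgebra.ofCoeff (Finsupp.comapDomain (fun b => embF hrn u + tembF hrn b) (AddMonoidAlgebra.coeff f) hinj) with htdef
  have hcoefft : ∀ b, coeff b t = coeff (embF hrn u + tembF hrn b) f := fun b => rfl
  refine ⟨t, ?_⟩
  rw [hJ1mc.mem_iff]
  intro a ha
  rw [MvPolynomial.mem_support_iff, coeff_sub] at ha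
  by_cases hform : ∃ b, a = embF hrn u + tembF hrn b
  · obtain ⟨b, rfl⟩ := hform
    rw [coeff_mul_embF, hcoefft, sub_self] at ha
    exact absurd rfl ha
  · have h2 : coeff a (tailIncl k r hrn t * monomial (embF hrn u) (1:k)) = 0 := by
      by_contra hcc
      exact hform (coeff_mul_embF_ne hrn _ _ _ hcc)
    rw [h2, sub_zero] at ha
    have haJ2 : (monomial a (1:k)) ∈ Phi r J :=
      hJ2mc f hf a (MvPolynomial.mem_support_iff.mpr ha)
    by_cases hI1a : (monomial (hdF hrn a) (1:k)) ∈ PiIdeal r J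
    · exact (hJ1J2 a).mpr hI1a
    · have hu := hOnly _ (hI2hd a haJ2) hI1a
      exact absurd ⟨tlF hrn a, by rw [← hu]; exact (hd_add_tl hrn a).symm⟩ hform

end Emb

end Stmt12Aux


set_option synthInstance.maxHeartbeats 1000000 in
set_option maxHeartbeats 1000000 in
/-- For a Borel-type monomial ideal `J` with `dim(S/J) ≥ n - r`,
with `J₁ = (J ∩ k[x_1,…,x_r])S` and `J₂ = J : (x_{r+1}⋯x_n)^∞`, the following are
equivalent: (a) `Π_r(J₂) = Π_r(J) + (u)` for some monomial
`u ∈ (Π_r(J) : 𝔪(r)) \ Π_r(J)`; (b) `J₂/J₁` has rank `1` over `k[x_{r+1},…,x_n]`. -/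
theorem stmt12 {k : Type*} [Field k] {n : ℕ}
    (J : Ideal (MvPolynomial (Fin n) k)) (hB : IsBorelType J)
    (r : ℕ) (hrn : r ≤ n)
    (hdim : ((n - r : ℕ) : WithBot (WithTop ℕ)) ≤ qdim J) :
    (∃ u : Fin r →₀ ℕ,
      (monomial u (1:k) : MvPolynomial (Fin r) k) ∈
        Submodule.colon (PiIdeal r J)
          (Ideal.span (Set.range (X : Fin r → MvPolynomial (Fin r) k))) ∧
      (monomial u (1:k) : MvPolynomial (Fin r) k) ∉ PiIdeal r J ∧
      PiIdeal r (Phi r J) =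
        PiIdeal r J ⊔ Ideal.span {(monomial u (1:k) : MvPolynomial (Fin r) k)}) ↔
    @Module.finrank (MvPolynomial (Fin (n - r)) k) (quotMod (Jone r J) (Phi r J)) _ _
      (quotModTail r hrn (Jone r J) (Phi r J)) = 1 := by
  classical
  obtain ⟨⟨G, hG⟩, _hBC⟩ := hB
  have hJmc : Stmt12Aux.MonClosed J := hG ▸ Stmt12Aux.monClosed_span G
  have hJ2mc : Stmt12Aux.MonClosed (Phi r J) := hJmc.phi
  have hJ1mc : Stmt12Aux.MonClosed (Jone r J) := by
    rw [Stmt12Aux.Jone_eq]; exact Stmt12Aux.monClosed_span _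
  have hI1mc : Stmt12Aux.MonClosed (PiIdeal r J) := hJmc.piIdeal hrn
  have hI2mc : Stmt12Aux.MonClosed (PiIdeal r (Phi r J)) := hJ2mc.piIdeal hrn
  have hI2 : ∀ w : Fin r →₀ ℕ, ((monomial w (1:k) : MvPolynomial (Fin r) k) ∈
      PiIdeal r (Phi r J) ↔ (monomial (Stmt12Aux.embF hrn w) (1:k)) ∈ Phi r J) :=
    fun w => hJ2mc.monomial_mem_piIdeal hrn
  have hI1 : ∀ w : Fin r →₀ ℕ, ((monomial w (1:k) : MvPolynomial (Fin r) k) ∈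
      PiIdeal r J ↔ (monomial (Stmt12Aux.embF hrn w) (1:k)) ∈ J) :=
    fun w => hJmc.monomial_mem_piIdeal hrn
  have hJ1J2 : ∀ a : Fin n →₀ ℕ, ((monomial a (1:k)) ∈ Jone r J ↔
      (monomial (Stmt12Aux.hdF hrn a) (1:k)) ∈ PiIdeal r J) := by
    intro a
    rw [Stmt12Aux.monomial_mem_Jone hrn, hI1]
  have hI2hd : ∀ a : Fin n →₀ ℕ, (monomial a (1:k)) ∈ Phi r J →
      (monomial (Stmt12Aux.hdF hrn a) (1:k)) ∈ PiIdeal r (Phi r J) :=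
    fun a h => (hI2 _).mpr (Stmt12Aux.hd_mem_Phi hrn h)
  letI instT : Module (MvPolynomial (Fin (n - r)) k) (quotMod (Jone r J) (Phi r J)) :=
    quotModTail r hrn (Jone r J) (Phi r J)
  have hmk_smul : ∀ (t : MvPolynomial (Fin (n - r)) k) (f : MvPolynomial (Fin n) k)
      (hf : f ∈ Phi r J),
      t • (Submodule.Quotient.mk ⟨f, hf⟩ : quotMod (Jone r J) (Phi r J)) =
        (Submodule.Quotient.mk ⟨tailIncl k r hrn t * f, Ideal.mul_mem_left _ _ hf⟩ :
          quotMod (Jone r J) (Phi r J)) := fun t f hf => rfl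
  have hmk_zero : ∀ (f : MvPolynomial (Fin n) k) (hf : f ∈ Phi r J),
      ((Submodule.Quotient.mk ⟨f, hf⟩ : quotMod (Jone r J) (Phi r J)) = 0 ↔ f ∈ Jone r J) := by
    intro f hf
    rw [Submodule.Quotient.mk_eq_zero]
    exact Iff.rfl
  constructor
  · rintro ⟨u, hcolon, hunot, heq⟩
    have huI2 : (monomial u (1:k) : MvPolynomial (Fin r) k) ∈ PiIdeal r (Phi r J) := by
      rw [heq]
      exact Submodule.mem_sup_right (Ideal.mem_span_singleton_self _)
    have huJ2 := (hI2 u).mp huI2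
    have hcolon' : ∀ j : Fin r,
        (monomial (u + Finsupp.single j 1) (1:k) : MvPolynomial (Fin r) k) ∈ PiIdeal r J := by
      intro j
      have h := Submodule.mem_colon.mp hcolon (X j) (Ideal.subset_span ⟨j, rfl⟩)
      rwa [smul_eq_mul, Stmt12Aux.monomial_mul_X] at h
    have hOnly : ∀ w : Fin r →₀ ℕ, (monomial w (1:k)) ∈ PiIdeal r (Phi r J) →
        (monomial w (1:k)) ∉ PiIdeal r J → w = u := by
      intro w hw2 hw1
      rcases Stmt12Aux.mem_sup_span_monomial hI1mc (heq ▸ hw2) with h | h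
      · exact absurd h hw1
      · by_contra hne
        have hex : ∃ j, u j < w j := by
          by_contra hc
          push_neg at hc
          exact hne (le_antisymm (Finsupp.le_def.mpr hc) h)
        obtain ⟨j, hj⟩ := hex
        apply hw1
        refine Stmt12Aux.monomial_mem_mono ?_ (hcolon' j)
        rw [Finsupp.le_def]
        intro i
        rw [Finsupp.add_apply, Finsupp.single_apply]
        by_cases hij : j = i
        · subst hij
          rw [if_pos rfl]
          omega
        · rw [if_neg hij]
          have := Finsupp.le_def.mp h i
          omega
    have hind : LinearIndependent (MvPolynomial (Fin (n - r)) k)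
        (fun _ : Fin 1 => (Submodule.Quotient.mk ⟨monomial (Stmt12Aux.embF hrn u) 1, huJ2⟩ :
          quotMod (Jone r J) (Phi r J))) := by
      rw [Fintype.linearIndependent_iff]
      intro g hg
      rw [Fin.sum_univ_one, hmk_smul, hmk_zero] at hg
      have hg0 : g 0 = 0 := Stmt12Aux.ind_core hrn hJ1mc hJ1J2 hunot (g := 0)
        (by intro a h; simp at h) (by rwa [add_zero])
      intro i
      rw [Subsingleton.elim i 0]
      exact hg0
    have hspan : ⊤ ≤ Submodule.span (MvPolynomial (Fin (n - r)) k)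
        {(Submodule.Quotient.mk ⟨monomial (Stmt12Aux.embF hrn u) 1, huJ2⟩ :
          quotMod (Jone r J) (Phi r J))} := by
      rintro x -
      obtain ⟨⟨f, hf⟩, rfl⟩ := Submodule.Quotient.mk_surjective _ x
      obtain ⟨t, ht⟩ := Stmt12Aux.span_core hrn hJ1mc hJ2mc hJ1J2 hI2hd hOnly hf
      rw [Submodule.mem_span_singleton]
      refine ⟨t, ?_⟩
      rw [hmk_smul, Submodule.Quotient.eq]
      have hneg : tailIncl k r hrn t * monomial (Stmt12Aux.embF hrn u) 1 - f ∈ Jone r J := by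
        have h2 := (Jone r J).neg_mem ht
        rwa [neg_sub] at h2
      exact hneg
    let B : Basis (Fin 1) (MvPolynomial (Fin (n - r)) k) (quotMod (Jone r J) (Phi r J)) :=
      Basis.mk hind (by rwa [Set.range_const])
    rw [Module.finrank_eq_card_basis B]
    simp
  · intro hfr
    have hne : ∃ w : Fin r →₀ ℕ, (monomial w (1:k)) ∈ PiIdeal r (Phi r J) ∧
        (monomial w (1:k)) ∉ PiIdeal r J := by
      by_contra hemp
      push_neg at hemp
      have hle : Phi r J ≤ Jone r J := by
        intro f hf
        rw [hJ1mc.mem_iff]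
        intro a ha
        exact (hJ1J2 a).mpr (hemp _ (hI2hd a (hJ2mc f hf a ha)))
      haveI : Subsingleton (quotMod (Jone r J) (Phi r J)) := by
        rw [Submodule.Quotient.subsingleton_iff]
        rw [Submodule.eq_top_iff']
        intro x
        exact hle x.2
      rw [Module.finrank_zero_of_subsingleton] at hfr
      exact one_ne_zero hfr.symm
    obtain ⟨u, hu2, hu1⟩ := hne
    have huJ2 := (hI2 u).mp hu2
    have hOnly : ∀ w : Fin r →₀ ℕ, (monomial w (1:k)) ∈ PiIdeal r (Phi r J) →
        (monomial w (1:k)) ∉ PiIdeal r J → w = u := by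
      intro w hw2 hw1
      by_contra hne2
      have hwJ2 := (hI2 w).mp hw2
      have hLI : LinearIndependent (MvPolynomial (Fin (n - r)) k)
          (![Submodule.Quotient.mk ⟨monomial (Stmt12Aux.embF hrn w) 1, hwJ2⟩,
             Submodule.Quotient.mk ⟨monomial (Stmt12Aux.embF hrn u) 1, huJ2⟩] :
            Fin 2 → quotMod (Jone r J) (Phi r J)) := by
        rw [Fintype.linearIndependent_iff]
        intro g hg
        rw [Fin.sum_univ_two] at hg
        simp only [Matrix.cons_val_zero, Matrix.cons_val_one, Matrix.head_cons] at hg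
        rw [hmk_smul, hmk_smul, ← Submodule.Quotient.mk_add, Submodule.Quotient.mk_eq_zero] at hg
        have hg' : tailIncl k r hrn (g 0) * monomial (Stmt12Aux.embF hrn w) 1 +
            tailIncl k r hrn (g 1) * monomial (Stmt12Aux.embF hrn u) 1 ∈ Jone r J := hg
        have hg0 : g 0 = 0 := Stmt12Aux.ind_core hrn hJ1mc hJ1J2 hw1
          (Stmt12Aux.forms_disjoint hrn hne2 (g 1)) hg'
        have hg1 : g 1 = 0 := Stmt12Aux.ind_core hrn hJ1mc hJ1J2 hu1
          (Stmt12Aux.forms_disjoint hrn (Ne.symm hne2) (g 0)) (by rwa [add_comm] at hg')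
        intro i
        fin_cases i <;> assumption
      have hrk := hLI.cardinal_lift_le_rank
      have hr1 : Module.rank (MvPolynomial (Fin (n - r)) k) (quotMod (Jone r J) (Phi r J)) = 1 :=
        rank_eq_one_iff_finrank_eq_one.mpr hfr
      rw [hr1, Cardinal.mk_fintype] at hrk
      simp at hrk
    refine ⟨u, ?_, hu1, ?_⟩
    · rw [Submodule.mem_colon]
      intro p hp
      induction hp using Submodule.span_induction with
      | mem x hx =>
        obtain ⟨j, rfl⟩ := hx
        rw [smul_eq_mul, Stmt12Aux.monomial_mul_X]
        by_cases hc : (monomial (u + Finsupp.single j 1) (1:k)) ∈ PiIdeal r J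
        · exact hc
        · have hin2 : (monomial (u + Finsupp.single j 1) (1:k)) ∈ PiIdeal r (Phi r J) := by
            rw [← Stmt12Aux.monomial_mul_X]
            exact Ideal.mul_mem_right _ _ hu2
          have heq2 := hOnly _ hin2 hc
          have hj := DFunLike.congr_fun heq2 j
          rw [Finsupp.add_apply, Finsupp.single_apply, if_pos rfl] at hj
          omega
      | zero =>
        rw [smul_zero]
        exact Ideal.zero_mem _
      | add x y hx hy ihx ihy =>
        rw [smul_add]
        exact Ideal.add_mem _ ihx ihy
      | smul c x hx ih =>
        rw [smul_comm]
        exact Submodule.smul_mem _ c ih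
    · apply le_antisymm
      · intro f hf
        nth_rewrite 1 [f.as_sum]
        refine Ideal.sum_mem _ fun w hw => ?_
        by_cases hc : (monomial w (1:k)) ∈ PiIdeal r J
        · exact Submodule.mem_sup_left (by
            rw [Stmt12Aux.monomial_eq_C_mul]
            exact Ideal.mul_mem_left _ _ hc)
        · have hwu := hOnly w (hI2mc f hf w hw) hc
          refine Submodule.mem_sup_right (Ideal.mem_span_singleton'.mpr
            ⟨C (coeff w f), ?_⟩)
          rw [C_mul_monomial, mul_one, hwu]
      · refine sup_le ?_ ?_
        · exact Ideal.map_mono (Stmt12Aux.le_Phi J)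
        · rw [Ideal.span_le, Set.singleton_subset_iff]
          exact hu2
end

section
/- The monomial ideal J = (x_1^2, x_1x_2, x_2^2, x_1x_3, x_1x_4) in S = k[x_1,...,x_n] with n ≥ 4 is of Borel type, but J is not the initial ideal (with respect to graded reverse lexicographic order) of any homogeneous prime ideal of S. -/
open MvPolynomial Finsupp Module

section Stmt16Aux

open MvPolynomial Paper

variable {k : Type*} [Field k] {n : ℕ}

/-- membership in a monomial ideal -/
lemma mem_monomialSpan_iff {G : Set (Fin n →₀ ℕ)} {d : Fin n →₀ ℕ} :
    (monomial d (1:k) ∈ Ideal.span ((fun e => (monomial e (1:k) : MvPolynomial (Fin n) k)) '' G))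
      ↔ ∃ e ∈ G, e ≤ d := by
  constructor
  · intro h
    rw [Ideal.span, Submodule.mem_span_set] at h
    obtain ⟨c, hc, hsum⟩ := h
    by_contra hne
    push_neg at hne
    have h1 : coeff d ((monomial d (1:k) : MvPolynomial (Fin n) k)) = 1 := by simp
    rw [← hsum, Finsupp.sum, coeff_sum] at h1
    have hz : ∀ p ∈ c.support, coeff d (c p • p) = 0 := by
      intro p hp
      obtain ⟨e, heG, hpe⟩ := hc hp
      have hpe' : (monomial e (1:k) : MvPolynomial (Fin n) k) = p := hpe
      have : c p • p = c p * (monomial e (1:k)) := by rw [← hpe']; rfl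
      rw [this, coeff_mul_monomial']
      rw [if_neg (hne e heG)]
    rw [Finset.sum_eq_zero hz] at h1
    exact one_ne_zero h1.symm
  · rintro ⟨e, heG, hle⟩
    have : (monomial d (1:k) : MvPolynomial (Fin n) k)
        = monomial (d - e) (1:k) * monomial e (1:k) := by
      rw [monomial_mul, one_mul, tsub_add_cancel_of_le hle]
    rw [this]
    exact Ideal.mul_mem_left _ _ (Ideal.subset_span ⟨e, heG, rfl⟩)

variable (m : MonomialOrder (Fin n))

lemma leadExp_mem_support {f : MvPolynomial (Fin n) k} (hf : f ≠ 0) :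
    leadExp m f ∈ f.support := by
  obtain ⟨d, hd, hsup⟩ := Finset.exists_mem_eq_sup f.support
    (by simpa using hf) (fun d => m.toSyn d)
  have : leadExp m f = d := by rw [leadExp, hsup, AddEquiv.symm_apply_apply]
  rwa [this]

lemma le_leadExp {f : MvPolynomial (Fin n) k} {v : Fin n →₀ ℕ} (hv : v ∈ f.support) :
    m.toSyn v ≤ m.toSyn (leadExp m f) := by
  rw [leadExp, AddEquiv.apply_symm_apply]
  exact Finset.le_sup hv

lemma leadExp_eq_of {f : MvPolynomial (Fin n) k} {d : Fin n →₀ ℕ} (hd : d ∈ f.support)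
    (h : ∀ v ∈ f.support, m.toSyn v ≤ m.toSyn d) : leadExp m f = d := by
  apply m.toSyn.injective
  apply le_antisymm
  · rw [leadExp, AddEquiv.apply_symm_apply]
    exact Finset.sup_le h
  · exact le_leadExp m hd

lemma leadExp_mul {p q : MvPolynomial (Fin n) k} (hp : p ≠ 0) (hq : q ≠ 0) :
    leadExp m (p * q) = leadExp m p + leadExp m q ∧ p * q ≠ 0 := by
  classical
  set dp := leadExp m p with hdp
  set dq := leadExp m q with hdq
  have hcoeff : coeff (dp + dq) (p * q) = coeff dp p * coeff dq q := by
    rw [coeff_mul]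
    apply Finset.sum_eq_single_of_mem (dp, dq) (Finset.HasAntidiagonal.mem_antidiagonal.mpr rfl)
    rintro ⟨a, b⟩ hab hne
    have habs : a + b = dp + dq := Finset.HasAntidiagonal.mem_antidiagonal.mp hab
    by_contra hnz
    have ha : a ∈ p.support := by
      rw [MvPolynomial.mem_support_iff]; intro h; rw [h, zero_mul] at hnz; exact hnz rfl
    have hb : b ∈ q.support := by
      rw [MvPolynomial.mem_support_iff]; intro h; rw [h, mul_zero] at hnz; exact hnz rfl
    have hlea : m.toSyn a ≤ m.toSyn dp := le_leadExp m ha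
    have hleb : m.toSyn b ≤ m.toSyn dq := le_leadExp m hb
    have hne' : a ≠ dp ∨ b ≠ dq := by
      by_contra hcon; push_neg at hcon
      exact hne (Prod.ext hcon.1 hcon.2)
    have hlt : m.toSyn a + m.toSyn b < m.toSyn dp + m.toSyn dq := by
      rcases hne' with h | h
      · exact add_lt_add_of_lt_of_le (lt_of_le_of_ne hlea (fun he => h (m.toSyn.injective he))) hleb
      · exact add_lt_add_of_le_of_lt hlea (lt_of_le_of_ne hleb (fun he => h (m.toSyn.injective he)))
    rw [← map_add, ← map_add, habs] at hlt
    exact lt_irrefl _ hlt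
  have hpc : coeff dp p ≠ 0 := MvPolynomial.mem_support_iff.mp (leadExp_mem_support m hp)
  have hqc : coeff dq q ≠ 0 := MvPolynomial.mem_support_iff.mp (leadExp_mem_support m hq)
  have hne : coeff (dp + dq) (p * q) ≠ 0 := by rw [hcoeff]; exact mul_ne_zero hpc hqc
  have hpq : p * q ≠ 0 := by intro h; rw [h] at hne; simp at hne
  refine ⟨?_, hpq⟩
  apply leadExp_eq_of
  · exact MvPolynomial.mem_support_iff.mpr hne
  · intro v hv
    have hvc : coeff v (p * q) ≠ 0 := MvPolynomial.mem_support_iff.mp hv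
    rw [coeff_mul] at hvc
    obtain ⟨⟨a, b⟩, hab, hnz⟩ := Finset.exists_ne_zero_of_sum_ne_zero hvc
    have habs : a + b = v := Finset.HasAntidiagonal.mem_antidiagonal.mp hab
    have ha : a ∈ p.support := by
      rw [MvPolynomial.mem_support_iff]; intro h; rw [h, zero_mul] at hnz; exact hnz rfl
    have hb : b ∈ q.support := by
      rw [MvPolynomial.mem_support_iff]; intro h; rw [h, mul_zero] at hnz; exact hnz rfl
    calc m.toSyn v = m.toSyn a + m.toSyn b := by rw [← map_add, habs]
    _ ≤ m.toSyn dp + m.toSyn dq :=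
        add_le_add (le_leadExp m ha) (le_leadExp m hb)
    _ = m.toSyn (dp + dq) := by rw [map_add]

lemma leadExp_zero_constant {p : MvPolynomial (Fin n) k} (hp : p ≠ 0)
    (h : leadExp m p = 0) : p = C (coeff 0 p) := by
  have hsupp : ∀ v ∈ p.support, v = 0 := by
    intro v hv
    have h1 : m.toSyn v ≤ m.toSyn (leadExp m p) := le_leadExp m hv
    rw [h] at h1
    have h2 : m.toSyn 0 ≤ m.toSyn v := m.toSyn_monotone zero_le
    exact m.toSyn.injective (le_antisymm h1 h2)
  ext w
  rw [coeff_C]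
  by_cases hw : w = 0
  · rw [hw, if_pos rfl]
  · rw [if_neg (fun h' => hw h'.symm)]
    by_contra hc
    exact hw (hsupp w (MvPolynomial.mem_support_iff.mpr hc))

end Stmt16Aux

open Paper MvPolynomial


section Stmt16Aux2

open MvPolynomial Paper

variable {k : Type*} [Field k] {n : ℕ}

lemma single_apply_val {i a : Fin n} {c : ℕ} {v : ℕ} (hi : (i:ℕ) = v) :
    Finsupp.single i c a = if (a:ℕ) = v then c else 0 := by
  rw [Finsupp.single_apply]
  by_cases h : (a:ℕ) = v
  · rw [if_pos h, if_pos (Fin.ext (by omega))]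
  · rw [if_neg h, if_neg (fun he => h (by rw [← he]; exact hi))]

lemma stotal_single (a : Fin n) (c : ℕ) : (∑ l, Finsupp.single a c l) = c := by
  simp [Finsupp.single_apply]

lemma total_add (x y : Fin n →₀ ℕ) : (∑ l, (x + y) l) = (∑ l, x l) + ∑ l, y l := by
  simp [Finsupp.add_apply, Finset.sum_add_distrib]

lemma single_le_total (v : Fin n →₀ ℕ) (a : Fin n) : v a ≤ ∑ l, v l :=
  Finset.single_le_sum (fun _ _ => Nat.zero_le _) (Finset.mem_univ a)

lemma pair_le_total (v : Fin n →₀ ℕ) {a b : Fin n} (hab : a ≠ b) :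
    v a + v b ≤ ∑ l, v l := by
  calc v a + v b = ∑ l ∈ ({a, b} : Finset (Fin n)), v l := (Finset.sum_pair hab).symm
  _ ≤ ∑ l, v l := Finset.sum_le_sum_of_subset (Finset.subset_univ _)

lemma triple_le_total (v : Fin n →₀ ℕ) {a b c : Fin n} (hab : a ≠ b) (hac : a ≠ c)
    (hbc : b ≠ c) : v a + v b + v c ≤ ∑ l, v l := by
  have h1 : a ∉ ({b, c} : Finset (Fin n)) := by simp [hab, hac]
  calc v a + v b + v c = v a + (v b + v c) := by ring
  _ = ∑ l ∈ ({a, b, c} : Finset (Fin n)), v l := by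
        rw [Finset.sum_insert h1, Finset.sum_pair hbc]
  _ ≤ ∑ l, v l := Finset.sum_le_sum_of_subset (Finset.subset_univ _)

lemma total_eq_zero {v : Fin n →₀ ℕ} (h : (∑ l, v l) = 0) : v = 0 := by
  ext a
  simp only [Finsupp.coe_zero, Pi.zero_apply]
  have := single_le_total v a
  omega

lemma drl_lt_deg {m : MonomialOrder (Fin n)} (hm : IsDegRevLex m) {u v : Fin n →₀ ℕ}
    (h : (∑ l, u l) < ∑ l, v l) : m.toSyn u < m.toSyn v := by
  refine (hm u v).mpr (Or.inl ?_)
  rwa [Finsupp.sum_fintype _ _ (fun _ => rfl), Finsupp.sum_fintype _ _ (fun _ => rfl)]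

lemma drl_lt {m : MonomialOrder (Fin n)} (hm : IsDegRevLex m) {u v : Fin n →₀ ℕ} {i : Fin n}
    (hdeg : (∑ l, u l) = ∑ l, v l) (hvi : v i < u i) (hj : ∀ j, i < j → u j = v j) :
    m.toSyn u < m.toSyn v := by
  refine (hm u v).mpr (Or.inr ⟨?_, i, hvi, hj⟩)
  rw [Finsupp.sum_fintype _ _ (fun _ => rfl), Finsupp.sum_fintype _ _ (fun _ => rfl)]
  exact hdeg

lemma decomp {i0 i1 : Fin n} (hne : i0 ≠ i1) (f : MvPolynomial (Fin n) k)
    (h01 : ∀ v ∈ f.support, v i0 + v i1 ≤ 1) :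
    ∃ A C R : MvPolynomial (Fin n) k,
      f = X i0 * A + X i1 * C + R ∧
      (∀ w, coeff w A = coeff (Finsupp.single i0 1 + w) f) ∧
      (∀ w ∈ C.support, Finsupp.single i1 1 + w ∈ f.support) ∧
      (∀ w ∈ R.support, w ∈ f.support ∧ w i0 = 0 ∧ w i1 = 0) := by
  classical
  have hles1 : ∀ v ∈ f.support.filter (fun v => ¬ v i0 = 0), Finsupp.single i0 1 ≤ v := by
    intro v hv
    have hv0 : ¬ v i0 = 0 := (Finset.mem_filter.mp hv).2
    rw [Finsupp.le_def]
    intro a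
    rw [Finsupp.single_apply]
    split_ifs with h
    · rw [← h]; omega
    · exact Nat.zero_le _
  have hles2 : ∀ v ∈ f.support.filter (fun v => v i0 = 0 ∧ ¬ v i1 = 0),
      Finsupp.single i1 1 ≤ v := by
    intro v hv
    have hv0 : ¬ v i1 = 0 := (Finset.mem_filter.mp hv).2.2
    rw [Finsupp.le_def]
    intro a
    rw [Finsupp.single_apply]
    split_ifs with h
    · rw [← h]; omega
    · exact Nat.zero_le _
  refine ⟨∑ v ∈ f.support.filter (fun v => ¬ v i0 = 0),
        monomial (v - Finsupp.single i0 1) (coeff v f),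
      ∑ v ∈ f.support.filter (fun v => v i0 = 0 ∧ ¬ v i1 = 0),
        monomial (v - Finsupp.single i1 1) (coeff v f),
      ∑ v ∈ f.support.filter (fun v => v i0 = 0 ∧ v i1 = 0),
        monomial v (coeff v f), ?_, ?_, ?_, ?_⟩
  · -- decomposition equation
    have e1 : X i0 * (∑ v ∈ f.support.filter (fun v => ¬ v i0 = 0),
          monomial (v - Finsupp.single i0 1) (coeff v f))
        = ∑ v ∈ f.support.filter (fun v => ¬ v i0 = 0), monomial v (coeff v f) := by
      rw [Finset.mul_sum]
      apply Finset.sum_congr rfl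
      intro v hv
      rw [show (X i0 : MvPolynomial (Fin n) k) = monomial (Finsupp.single i0 1) 1 from rfl,
        monomial_mul, one_mul, add_tsub_cancel_of_le (hles1 v hv)]
    have e2 : X i1 * (∑ v ∈ f.support.filter (fun v => v i0 = 0 ∧ ¬ v i1 = 0),
          monomial (v - Finsupp.single i1 1) (coeff v f))
        = ∑ v ∈ f.support.filter (fun v => v i0 = 0 ∧ ¬ v i1 = 0),
            monomial v (coeff v f) := by
      rw [Finset.mul_sum]
      apply Finset.sum_congr rfl
      intro v hv
      rw [show (X i1 : MvPolynomial (Fin n) k) = monomial (Finsupp.single i1 1) 1 from rfl,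
        monomial_mul, one_mul, add_tsub_cancel_of_le (hles2 v hv)]
    have hsplit1 : (∑ v ∈ f.support.filter (fun v => v i0 = 0), monomial v (coeff v f))
          + ∑ v ∈ f.support.filter (fun v => ¬ v i0 = 0), monomial v (coeff v f)
        = ∑ v ∈ f.support, monomial v (coeff v f) :=
      Finset.sum_filter_add_sum_filter_not _ _ _
    have hsplit2 : (∑ v ∈ (f.support.filter (fun v => v i0 = 0)).filter (fun v => v i1 = 0),
            monomial v (coeff v f))
          + ∑ v ∈ (f.support.filter (fun v => v i0 = 0)).filter (fun v => ¬ v i1 = 0),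
            monomial v (coeff v f)
        = ∑ v ∈ f.support.filter (fun v => v i0 = 0), monomial v (coeff v f) :=
      Finset.sum_filter_add_sum_filter_not _ _ _
    rw [Finset.filter_filter, Finset.filter_filter] at hsplit2
    rw [support_sum_monomial_coeff f] at hsplit1
    rw [e1, e2]
    conv_lhs => rw [← hsplit1, ← hsplit2]
    abel
  · -- coeff formula for A
    intro w
    rw [coeff_sum]
    have hterm : ∀ v ∈ f.support.filter (fun v => ¬ v i0 = 0),
        coeff w (monomial (v - Finsupp.single i0 1) (coeff v f))
        = if v = Finsupp.single i0 1 + w then coeff v f else 0 := by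
      intro v hv
      rw [coeff_monomial]
      by_cases hcase : v = Finsupp.single i0 1 + w
      · have h2 : v - Finsupp.single i0 1 = w := by rw [hcase, add_tsub_cancel_left]
        rw [if_pos h2, if_pos hcase]
      · have h2 : ¬ (v - Finsupp.single i0 1 = w) := by
          intro h
          apply hcase
          rw [← h, add_tsub_cancel_of_le (hles1 v hv)]
        rw [if_neg h2, if_neg hcase]
    rw [Finset.sum_congr rfl hterm, Finset.sum_ite_eq' _ (Finsupp.single i0 1 + w)
      (fun v => coeff v f)]
    split_ifs with hmem
    · rfl
    · by_cases hsup : Finsupp.single i0 1 + w ∈ f.support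
      · exfalso
        apply hmem
        rw [Finset.mem_filter]
        refine ⟨hsup, ?_⟩
        rw [Finsupp.add_apply, Finsupp.single_eq_same]
        omega
      · rw [MvPolynomial.notMem_support_iff.mp hsup]
  · -- support of C
    intro w hw
    have := MvPolynomial.support_sum hw
    rw [Finset.mem_biUnion] at this
    obtain ⟨v, hv, hw2⟩ := this
    have hsub := MvPolynomial.support_monomial_subset hw2
    rw [Finset.mem_singleton] at hsub
    rw [hsub, add_tsub_cancel_of_le (hles2 v hv)]
    exact (Finset.mem_filter.mp hv).1
  · -- support of R
    intro w hw
    have := MvPolynomial.support_sum hw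
    rw [Finset.mem_biUnion] at this
    obtain ⟨v, hv, hw2⟩ := this
    have hsub := MvPolynomial.support_monomial_subset hw2
    rw [Finset.mem_singleton] at hsub
    rw [hsub]
    exact ⟨(Finset.mem_filter.mp hv).1, (Finset.mem_filter.mp hv).2⟩

end Stmt16Aux2


section Stmt16Main

open MvPolynomial Paper

variable {k : Type*} [Field k] {n : ℕ}

/-- the five generators -/
def G5 (i0 i1 i2 i3 : Fin n) : Set (Fin n →₀ ℕ) :=
  {Finsupp.single i0 2, Finsupp.single i0 1 + Finsupp.single i1 1, Finsupp.single i1 2,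
    Finsupp.single i0 1 + Finsupp.single i2 1, Finsupp.single i0 1 + Finsupp.single i3 1}

variable {i0 i1 i2 i3 : Fin n}

lemma G5_prop (h0 : (i0:ℕ) = 0) (h1 : (i1:ℕ) = 1) (h2 : (i2:ℕ) = 2) (h3 : (i3:ℕ) = 3) :
    ∀ e ∈ G5 i0 i1 i2 i3, 1 ≤ e i0 ∨ 2 ≤ e i1 := by
  intro e he
  simp only [G5, Set.mem_insert_iff, Set.mem_singleton_iff] at he
  rcases he with rfl | rfl | rfl | rfl | rfl <;>
    [skip; skip; right; skip; skip] <;>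
    [left; left; skip; left; left] <;>
    simp [Finsupp.add_apply, single_apply_val h0, single_apply_val h1, single_apply_val h2,
      single_apply_val h3, h0, h1, h2, h3]

lemma G5_min4 (h0 : (i0:ℕ) = 0) (h1 : (i1:ℕ) = 1) (h2 : (i2:ℕ) = 2) (h3 : (i3:ℕ) = 3) :
    ∀ e ∈ G5 i0 i1 i2 i3, e ≤ Finsupp.single i0 1 + Finsupp.single i2 1 →
      e = Finsupp.single i0 1 + Finsupp.single i2 1 := by
  intro e he hle
  simp only [G5, Set.mem_insert_iff, Set.mem_singleton_iff] at he
  rcases he with rfl | rfl | rfl | rfl | rfl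
  · exfalso
    have hx := Finsupp.le_def.mp hle i0
    simp only [Finsupp.add_apply, single_apply_val h0, single_apply_val h1,
      single_apply_val h2, single_apply_val h3, h0, h1, h2, h3] at hx
    first
    | omega
    | (norm_num at hx)
    | (norm_num at hx; omega)
  · exfalso
    have hx := Finsupp.le_def.mp hle i1
    simp only [Finsupp.add_apply, single_apply_val h0, single_apply_val h1,
      single_apply_val h2, single_apply_val h3, h0, h1, h2, h3] at hx
    first
    | omega
    | (norm_num at hx)
    | (norm_num at hx; omega)
  · exfalso
    have hx := Finsupp.le_def.mp hle i1
    simp only [Finsupp.add_apply, single_apply_val h0, single_apply_val h1,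
      single_apply_val h2, single_apply_val h3, h0, h1, h2, h3] at hx
    first
    | omega
    | (norm_num at hx)
    | (norm_num at hx; omega)
  · rfl
  · exfalso
    have hx := Finsupp.le_def.mp hle i3
    simp only [Finsupp.add_apply, single_apply_val h0, single_apply_val h1,
      single_apply_val h2, single_apply_val h3, h0, h1, h2, h3] at hx
    first
    | omega
    | (norm_num at hx)
    | (norm_num at hx; omega)

lemma G5_min5 (h0 : (i0:ℕ) = 0) (h1 : (i1:ℕ) = 1) (h2 : (i2:ℕ) = 2) (h3 : (i3:ℕ) = 3) :
    ∀ e ∈ G5 i0 i1 i2 i3, e ≤ Finsupp.single i0 1 + Finsupp.single i3 1 →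
      e = Finsupp.single i0 1 + Finsupp.single i3 1 := by
  intro e he hle
  simp only [G5, Set.mem_insert_iff, Set.mem_singleton_iff] at he
  rcases he with rfl | rfl | rfl | rfl | rfl
  · exfalso
    have hx := Finsupp.le_def.mp hle i0
    simp only [Finsupp.add_apply, single_apply_val h0, single_apply_val h1,
      single_apply_val h2, single_apply_val h3, h0, h1, h2, h3] at hx
    first
    | omega
    | (norm_num at hx)
    | (norm_num at hx; omega)
  · exfalso
    have hx := Finsupp.le_def.mp hle i1
    simp only [Finsupp.add_apply, single_apply_val h0, single_apply_val h1,
      single_apply_val h2, single_apply_val h3, h0, h1, h2, h3] at hx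
    first
    | omega
    | (norm_num at hx)
    | (norm_num at hx; omega)
  · exfalso
    have hx := Finsupp.le_def.mp hle i1
    simp only [Finsupp.add_apply, single_apply_val h0, single_apply_val h1,
      single_apply_val h2, single_apply_val h3, h0, h1, h2, h3] at hx
    first
    | omega
    | (norm_num at hx)
    | (norm_num at hx; omega)
  · exfalso
    have hx := Finsupp.le_def.mp hle i2
    simp only [Finsupp.add_apply, single_apply_val h0, single_apply_val h1,
      single_apply_val h2, single_apply_val h3, h0, h1, h2, h3] at hx
    first
    | omega
    | (norm_num at hx)
    | (norm_num at hx; omega)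
  · rfl

lemma key4 {m : MonomialOrder (Fin n)} (hm : IsDegRevLex m)
    (h0 : (i0:ℕ) = 0) (h1 : (i1:ℕ) = 1) (h2 : (i2:ℕ) = 2) :
    ∀ v : Fin n →₀ ℕ, m.toSyn v ≤ m.toSyn (Finsupp.single i0 1 + Finsupp.single i2 1) →
      (∑ l, v l) ≤ 2 ∧ v i0 + v i1 ≤ 1 := by
  intro v hv
  have ne01 : i0 ≠ i1 := Fin.ne_of_val_ne (by omega)
  have hg4sum : (∑ l, (Finsupp.single i0 1 + Finsupp.single i2 1 : Fin n →₀ ℕ) l) = 2 := by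
    rw [total_add, stotal_single, stotal_single]
  have hdeg : (∑ l, v l) ≤ 2 := by
    by_contra hd
    push_neg at hd
    exact absurd hv (not_le.mpr (drl_lt_deg hm (by omega)))
  refine ⟨hdeg, ?_⟩
  by_contra hc
  push_neg at hc
  have hz : ∀ a : Fin n, a ≠ i0 → a ≠ i1 → v a = 0 := by
    intro a ha0 ha1
    have h3 := triple_le_total v ne01 (Ne.symm ha0) (Ne.symm ha1)
    omega
  have hlt : m.toSyn (Finsupp.single i0 1 + Finsupp.single i2 1) < m.toSyn v := by
    apply drl_lt hm (i := i2)
    · have hp := pair_le_total v ne01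
      omega
    · have hz2 := hz i2 (Fin.ne_of_val_ne (by omega)) (Fin.ne_of_val_ne (by omega))
      rw [hz2, Finsupp.add_apply, single_apply_val h0, single_apply_val h2, h2]
      norm_num
    · intro j hj
      have hj2 : 2 < (j:ℕ) := by rw [← h2]; exact hj
      have hz' := hz j (Fin.ne_of_val_ne (by omega)) (Fin.ne_of_val_ne (by omega))
      rw [hz', Finsupp.add_apply, single_apply_val h0, single_apply_val h2]
      rw [if_neg (by omega), if_neg (by omega)]
  exact absurd hv (not_le.mpr hlt)

lemma key5 {m : MonomialOrder (Fin n)} (hm : IsDegRevLex m)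
    (h0 : (i0:ℕ) = 0) (h1 : (i1:ℕ) = 1) (h2 : (i2:ℕ) = 2) (h3 : (i3:ℕ) = 3) :
    ∀ v : Fin n →₀ ℕ, m.toSyn v ≤ m.toSyn (Finsupp.single i0 1 + Finsupp.single i3 1) →
      ((∑ l, v l) ≤ 2 ∧ v i0 + v i1 ≤ 1) ∧ (1 ≤ v i0 → v i2 = 0) := by
  intro v hv
  have ne01 : i0 ≠ i1 := Fin.ne_of_val_ne (by omega)
  have ne02 : i0 ≠ i2 := Fin.ne_of_val_ne (by omega)
  have hg5sum : (∑ l, (Finsupp.single i0 1 + Finsupp.single i3 1 : Fin n →₀ ℕ) l) = 2 := by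
    rw [total_add, stotal_single, stotal_single]
  have hdeg : (∑ l, v l) ≤ 2 := by
    by_contra hd
    push_neg at hd
    exact absurd hv (not_le.mpr (drl_lt_deg hm (by omega)))
  have h01 : v i0 + v i1 ≤ 1 := by
    by_contra hc
    push_neg at hc
    have hz : ∀ a : Fin n, a ≠ i0 → a ≠ i1 → v a = 0 := by
      intro a ha0 ha1
      have h3' := triple_le_total v ne01 (Ne.symm ha0) (Ne.symm ha1)
      omega
    have hlt : m.toSyn (Finsupp.single i0 1 + Finsupp.single i3 1) < m.toSyn v := by
      apply drl_lt hm (i := i3)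
      · have hp := pair_le_total v ne01
        omega
      · have hz2 := hz i3 (Fin.ne_of_val_ne (by omega)) (Fin.ne_of_val_ne (by omega))
        rw [hz2, Finsupp.add_apply, single_apply_val h0, single_apply_val h3, h3]
        norm_num
      · intro j hj
        have hj2 : 3 < (j:ℕ) := by rw [← h3]; exact hj
        have hz' := hz j (Fin.ne_of_val_ne (by omega)) (Fin.ne_of_val_ne (by omega))
        rw [hz', Finsupp.add_apply, single_apply_val h0, single_apply_val h3]
        rw [if_neg (by omega), if_neg (by omega)]
    exact absurd hv (not_le.mpr hlt)
  refine ⟨⟨hdeg, h01⟩, ?_⟩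
  intro hv0
  by_contra hc
  have hz : ∀ a : Fin n, a ≠ i0 → a ≠ i2 → v a = 0 := by
    intro a ha0 ha2
    have h3' := triple_le_total v ne02 (Ne.symm ha0) (Ne.symm ha2)
    omega
  have hlt : m.toSyn (Finsupp.single i0 1 + Finsupp.single i3 1) < m.toSyn v := by
    apply drl_lt hm (i := i3)
    · have hp := pair_le_total v ne02
      omega
    · have hz2 := hz i3 (Fin.ne_of_val_ne (by omega)) (Fin.ne_of_val_ne (by omega))
      rw [hz2, Finsupp.add_apply, single_apply_val h0, single_apply_val h3, h3]
      norm_num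
    · intro j hj
      have hj2 : 3 < (j:ℕ) := by rw [← h3]; exact hj
      have hz' := hz j (Fin.ne_of_val_ne (by omega)) (Fin.ne_of_val_ne (by omega))
      rw [hz', Finsupp.add_apply, single_apply_val h0, single_apply_val h3]
      rw [if_neg (by omega), if_neg (by omega)]
  exact absurd hv (not_le.mpr hlt)

lemma no_prime (m : MonomialOrder (Fin n)) (hm : IsDegRevLex m)
    (h0 : (i0:ℕ) = 0) (h1 : (i1:ℕ) = 1) (h2 : (i2:ℕ) = 2) (h3 : (i3:ℕ) = 3)
    (J : Ideal (MvPolynomial (Fin n) k))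
    (hJG : J = Ideal.span
      ((fun d => (monomial d (1:k) : MvPolynomial (Fin n) k)) '' (G5 i0 i1 i2 i3))) :
    ¬ ∃ P : Ideal (MvPolynomial (Fin n) k), P.IsPrime ∧ IsHomogIdeal P ∧
        initialIdeal m P = J := by
  classical
  rintro ⟨P, hP, hPhom, hinit⟩
  have ne01 : i0 ≠ i1 := Fin.ne_of_val_ne (by omega)
  have ne10 : i1 ≠ i0 := Fin.ne_of_val_ne (by omega)
  have Jmem : ∀ d : Fin n →₀ ℕ,
      ((monomial d (1:k) : MvPolynomial (Fin n) k) ∈ J ↔ ∃ e ∈ G5 i0 i1 i2 i3, e ≤ d) := by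
    intro d
    rw [hJG]
    exact mem_monomialSpan_iff
  have hGprop := G5_prop h0 h1 h2 h3
  -- every nonzero element of P has its lead exponent in J
  have hleadG : ∀ f : MvPolynomial (Fin n) k, f ∈ P → f ≠ 0 →
      ∃ e ∈ G5 i0 i1 i2 i3, e ≤ leadExp m f := by
    intro f hf hf0
    apply (Jmem _).1
    rw [← hinit]
    exact Ideal.subset_span ⟨f, hf, hf0, rfl⟩
  have hGenSet : {g | ∃ f ∈ P, f ≠ 0 ∧ g = (monomial (leadExp m f) (1:k) : MvPolynomial (Fin n) k)}
      = (fun d => (monomial d (1:k) : MvPolynomial (Fin n) k)) ''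
        {d | ∃ f ∈ P, f ≠ 0 ∧ leadExp m f = d} := by
    ext g
    constructor
    · rintro ⟨f, hf, hf0, rfl⟩
      exact ⟨leadExp m f, ⟨f, hf, hf0, rfl⟩, rfl⟩
    · rintro ⟨d, ⟨f, hf, hf0, rfl⟩, rfl⟩
      exact ⟨f, hf, hf0, rfl⟩
  have hwit : ∀ u, u ∈ G5 i0 i1 i2 i3 → (∀ e ∈ G5 i0 i1 i2 i3, e ≤ u → e = u) →
      ∃ f, f ∈ P ∧ f ≠ 0 ∧ leadExp m f = u := by
    intro u hu hmin
    have h1 : (monomial u (1:k) : MvPolynomial (Fin n) k) ∈ J := (Jmem u).2 ⟨u, hu, le_refl u⟩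
    rw [← hinit] at h1
    have h2 : (monomial u (1:k) : MvPolynomial (Fin n) k) ∈
        Ideal.span ((fun d => (monomial d (1:k) : MvPolynomial (Fin n) k)) ''
          {d | ∃ f ∈ P, f ≠ 0 ∧ leadExp m f = d}) := by
      rw [← hGenSet]
      exact h1
    obtain ⟨d, hd, hdu⟩ := mem_monomialSpan_iff.1 h2
    obtain ⟨f, hf, hf0, rfl⟩ := hd
    obtain ⟨e, heG, hle⟩ := hleadG f hf hf0
    have heu : e = u := hmin e heG (le_trans hle hdu)
    exact ⟨f, hf, hf0, le_antisymm hdu (heu ▸ hle)⟩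
  -- witnesses with lead exponents x0*x2 and x0*x3
  obtain ⟨f, hfP, hf0, hlf⟩ := hwit (Finsupp.single i0 1 + Finsupp.single i2 1)
    (by simp [G5]) (G5_min4 h0 h1 h2 h3)
  obtain ⟨f', hf'P, hf'0, hlf'⟩ := hwit (Finsupp.single i0 1 + Finsupp.single i3 1)
    (by simp [G5]) (G5_min5 h0 h1 h2 h3)
  have hsuppf : ∀ v ∈ f.support, (∑ l, v l) ≤ 2 ∧ v i0 + v i1 ≤ 1 := by
    intro v hv
    have hle := le_leadExp m hv
    rw [hlf] at hle
    exact key4 hm h0 h1 h2 v hle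
  have hsuppf' : ∀ v ∈ f'.support,
      ((∑ l, v l) ≤ 2 ∧ v i0 + v i1 ≤ 1) ∧ (1 ≤ v i0 → v i2 = 0) := by
    intro v hv
    have hle := le_leadExp m hv
    rw [hlf'] at hle
    exact key5 hm h0 h1 h2 h3 v hle
  -- decompositions
  obtain ⟨A, Cg, Rg, hdec, hcA, hsC, hsR⟩ := decomp ne01 f (fun v hv => (hsuppf v hv).2)
  obtain ⟨A', Cg', Rg', hdec', hcA', hsC', hsR'⟩ :=
    decomp ne01 f' (fun v hv => (hsuppf' v hv).1.2)
  -- support properties of the pieces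
  have hT2A : ∀ w ∈ A.support, w i0 = 0 ∧ w i1 = 0 := by
    intro w hw
    have hc := MvPolynomial.mem_support_iff.mp hw
    rw [hcA w] at hc
    have hv : Finsupp.single i0 1 + w ∈ f.support := MvPolynomial.mem_support_iff.mpr hc
    have h01 := (hsuppf _ hv).2
    rw [Finsupp.add_apply, Finsupp.add_apply, Finsupp.single_eq_same,
      Finsupp.single_eq_of_ne ne10] at h01
    omega
  have hT2A' : ∀ w ∈ A'.support, w i0 = 0 ∧ w i1 = 0 := by
    intro w hw
    have hc := MvPolynomial.mem_support_iff.mp hw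
    rw [hcA' w] at hc
    have hv : Finsupp.single i0 1 + w ∈ f'.support := MvPolynomial.mem_support_iff.mpr hc
    have h01 := (hsuppf' _ hv).1.2
    rw [Finsupp.add_apply, Finsupp.add_apply, Finsupp.single_eq_same,
      Finsupp.single_eq_of_ne ne10] at h01
    omega
  have hsumA : ∀ w ∈ A.support, (∑ l, w l) ≤ 1 := by
    intro w hw
    have hc := MvPolynomial.mem_support_iff.mp hw
    rw [hcA w] at hc
    have hv : Finsupp.single i0 1 + w ∈ f.support := MvPolynomial.mem_support_iff.mpr hc
    have hsum := (hsuppf _ hv).1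
    rw [total_add, stotal_single] at hsum
    omega
  have hsumA' : ∀ w ∈ A'.support, (∑ l, w l) ≤ 1 := by
    intro w hw
    have hc := MvPolynomial.mem_support_iff.mp hw
    rw [hcA' w] at hc
    have hv : Finsupp.single i0 1 + w ∈ f'.support := MvPolynomial.mem_support_iff.mpr hc
    have hsum := (hsuppf' _ hv).1.1
    rw [total_add, stotal_single] at hsum
    omega
  have hT2C : ∀ w ∈ Cg.support, w i0 = 0 ∧ w i1 = 0 := by
    intro w hw
    have hv := hsC w hw
    have h01 := (hsuppf _ hv).2
    rw [Finsupp.add_apply, Finsupp.add_apply, Finsupp.single_eq_same,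
      Finsupp.single_eq_of_ne ne01] at h01
    omega
  have hT2C' : ∀ w ∈ Cg'.support, w i0 = 0 ∧ w i1 = 0 := by
    intro w hw
    have hv := hsC' w hw
    have h01 := (hsuppf' _ hv).1.2
    rw [Finsupp.add_apply, Finsupp.add_apply, Finsupp.single_eq_same,
      Finsupp.single_eq_of_ne ne01] at h01
    omega
  have hT2R : ∀ w ∈ Rg.support, w i0 = 0 ∧ w i1 = 0 := fun w hw => (hsR w hw).2
  have hT2R' : ∀ w ∈ Rg'.support, w i0 = 0 ∧ w i1 = 0 := fun w hw => (hsR' w hw).2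
  -- key nonzero coefficients
  have hfc : coeff (Finsupp.single i0 1 + Finsupp.single i2 1) f ≠ 0 := by
    apply MvPolynomial.mem_support_iff.mp
    rw [← hlf]
    exact leadExp_mem_support m hf0
  have hf'c : coeff (Finsupp.single i0 1 + Finsupp.single i3 1) f' ≠ 0 := by
    apply MvPolynomial.mem_support_iff.mp
    rw [← hlf']
    exact leadExp_mem_support m hf'0
  have hcAe2 : coeff (Finsupp.single i2 1) A
      = coeff (Finsupp.single i0 1 + Finsupp.single i2 1) f := hcA _
  have hcA'e3 : coeff (Finsupp.single i3 1) A'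
      = coeff (Finsupp.single i0 1 + Finsupp.single i3 1) f' := hcA' _
  have hAne : A ≠ 0 := by
    intro h
    rw [h, coeff_zero] at hcAe2
    exact hfc hcAe2.symm
  have hA'ne : A' ≠ 0 := by
    intro h
    rw [h, coeff_zero] at hcA'e3
    exact hf'c hcA'e3.symm
  have hA'2zero : coeff (Finsupp.single i2 1) A' = 0 := by
    rw [hcA']
    by_contra hcon
    have hv : Finsupp.single i0 1 + Finsupp.single i2 1 ∈ f'.support :=
      MvPolynomial.mem_support_iff.mpr hcon
    have h3' := (hsuppf' _ hv).2
    rw [Finsupp.add_apply, Finsupp.add_apply, Finsupp.single_eq_same,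
      Finsupp.single_eq_of_ne (Fin.ne_of_val_ne (show (i0:ℕ) ≠ (i2:ℕ) by omega)),
      Finsupp.single_eq_of_ne (Fin.ne_of_val_ne (show (i2:ℕ) ≠ (i0:ℕ) by omega)),
      Finsupp.single_eq_same] at h3'
    omega
  -- T2 closure
  have hT2mul : ∀ p q : MvPolynomial (Fin n) k, (∀ w ∈ p.support, w i0 = 0 ∧ w i1 = 0) →
      (∀ w ∈ q.support, w i0 = 0 ∧ w i1 = 0) →
      ∀ w ∈ (p * q).support, w i0 = 0 ∧ w i1 = 0 := by
    intro p q hp hq w hw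
    have hc := MvPolynomial.mem_support_iff.mp hw
    rw [coeff_mul] at hc
    obtain ⟨⟨a, b⟩, hab, hnz⟩ := Finset.exists_ne_zero_of_sum_ne_zero hc
    have habs : a + b = w := Finset.HasAntidiagonal.mem_antidiagonal.mp hab
    have ha : a ∈ p.support := MvPolynomial.mem_support_iff.mpr
      (fun h => hnz (by rw [show coeff (a,b).1 p = coeff a p from rfl, h, zero_mul]))
    have hb : b ∈ q.support := MvPolynomial.mem_support_iff.mpr
      (fun h => hnz (by rw [show coeff (a,b).2 q = coeff b q from rfl, h, mul_zero]))
    have ha2 := hp a ha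
    have hb2 := hq b hb
    constructor <;> (rw [← habs, Finsupp.add_apply]; omega)
  have hT2Φ : ∀ w ∈ (A' * Cg - A * Cg').support, w i0 = 0 ∧ w i1 = 0 := by
    intro w hw
    rcases Finset.mem_union.mp (MvPolynomial.support_sub _ _ _ hw) with h | h
    · exact hT2mul _ _ hT2A' hT2C _ h
    · exact hT2mul _ _ hT2A hT2C' _ h
  have hT2Ψ : ∀ w ∈ (A' * Rg - A * Rg').support, w i0 = 0 ∧ w i1 = 0 := by
    intro w hw
    rcases Finset.mem_union.mp (MvPolynomial.support_sub _ _ _ hw) with h | h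
    · exact hT2mul _ _ hT2A' hT2R _ h
    · exact hT2mul _ _ hT2A hT2R' _ h
  -- the S-element vanishes
  have hEeq : A' * f - A * f' = X i1 * (A' * Cg - A * Cg') + (A' * Rg - A * Rg') := by
    rw [hdec, hdec']
    ring
  have hEP : A' * f - A * f' ∈ P :=
    Ideal.sub_mem _ (Ideal.mul_mem_left _ _ hfP) (Ideal.mul_mem_left _ _ hf'P)
  have hE0 : A' * f = A * f' := by
    rw [← sub_eq_zero]
    by_contra hne
    obtain ⟨e, heG, hle⟩ := hleadG _ hEP hne
    have hv : leadExp m (A' * f - A * f') ∈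
        (X i1 * (A' * Cg - A * Cg') + (A' * Rg - A * Rg')).support := by
      rw [← hEeq]
      exact leadExp_mem_support m hne
    have hle0 := Finsupp.le_def.mp hle i0
    have hle1 := Finsupp.le_def.mp hle i1
    have hprop := hGprop e heG
    rcases Finset.mem_union.mp (MvPolynomial.support_add hv) with h | h
    · have hc := MvPolynomial.mem_support_iff.mp h
      rw [show (X i1 : MvPolynomial (Fin n) k) * (A' * Cg - A * Cg')
          = (A' * Cg - A * Cg') * monomial (Finsupp.single i1 1) 1 by
            rw [mul_comm]; rfl] at hc
      rw [coeff_mul_monomial'] at hc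
      by_cases hle1' : Finsupp.single i1 1 ≤ leadExp m (A' * f - A * f')
      · rw [if_pos hle1', mul_one] at hc
        have hw := hT2Φ _ (MvPolynomial.mem_support_iff.mpr hc)
        have hw0 := hw.1
        have hw1 := hw.2
        rw [Finsupp.tsub_apply, Finsupp.single_eq_of_ne ne01] at hw0
        rw [Finsupp.tsub_apply, Finsupp.single_eq_same] at hw1
        have hge1 := Finsupp.le_def.mp hle1' i1
        rw [Finsupp.single_eq_same] at hge1
        omega
      · rw [if_neg hle1'] at hc
        exact hc rfl
    · have hw := hT2Ψ _ h
      omega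
  -- lead exponent of A
  have hdAne : leadExp m A ≠ 0 := by
    intro h
    have hmem : Finsupp.single i2 1 ∈ A.support := by
      apply MvPolynomial.mem_support_iff.mpr
      rw [hcAe2]
      exact hfc
    have h1' := le_leadExp m hmem
    rw [h] at h1'
    have h2' : m.toSyn 0 ≤ m.toSyn (Finsupp.single i2 1) := m.toSyn_monotone zero_le
    have h3' := m.toSyn.injective (le_antisymm h1' h2')
    exact one_ne_zero (Finsupp.single_eq_zero.mp h3')
  have hsumdA1 : (∑ l, leadExp m A l) ≤ 1 := hsumA _ (leadExp_mem_support m hAne)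
  have hsumdAge : 1 ≤ ∑ l, leadExp m A l := by
    by_contra hcon
    push_neg at hcon
    exact hdAne (total_eq_zero (by omega))
  -- A is irreducible, hence prime
  have hone : leadExp m (1 : MvPolynomial (Fin n) k) = 0 := by
    apply leadExp_eq_of
    · apply MvPolynomial.mem_support_iff.mpr
      simp
    · intro v hv
      have hc := MvPolynomial.mem_support_iff.mp hv
      rw [coeff_one] at hc
      by_cases hv0 : v = 0
      · rw [hv0]
      · rw [if_neg (fun h => hv0 h.symm)] at hc
        exact absurd rfl hc
  have hirr : Irreducible A := by
    constructor
    · intro hu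
      obtain ⟨B, hB⟩ := hu.exists_right_inv
      have hBne : B ≠ 0 := by
        rintro rfl
        rw [mul_zero] at hB
        exact one_ne_zero hB.symm
      have hmul := (leadExp_mul m hAne hBne).1
      rw [hB, hone] at hmul
      have htot : (∑ l, leadExp m A l) + (∑ l, leadExp m B l) = 0 := by
        rw [← total_add, ← hmul]
        simp
      omega
    · intro B Cc hBC
      have hBne : B ≠ 0 := by
        rintro rfl
        rw [zero_mul] at hBC
        exact hAne hBC
      have hCne : Cc ≠ 0 := by
        rintro rfl
        rw [mul_zero] at hBC
        exact hAne hBC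
      have hmul := (leadExp_mul m hBne hCne).1
      rw [← hBC] at hmul
      have htot : (∑ l, leadExp m B l) + (∑ l, leadExp m Cc l) ≤ 1 := by
        rw [← total_add, ← hmul]
        exact hsumdA1
      by_cases hB0 : (∑ l, leadExp m B l) = 0
      · left
        have hBconst : B = C (coeff 0 B) :=
          leadExp_zero_constant m hBne (total_eq_zero hB0)
        have hc0 : coeff 0 B ≠ 0 := by
          intro h
          rw [h, map_zero] at hBconst
          exact hBne hBconst
        rw [hBconst]
        exact (isUnit_iff_ne_zero.mpr hc0).map (MvPolynomial.C : k →+* MvPolynomial (Fin n) k)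
      · right
        have hC0 : (∑ l, leadExp m Cc l) = 0 := by omega
        have hCconst : Cc = C (coeff 0 Cc) :=
          leadExp_zero_constant m hCne (total_eq_zero hC0)
        have hc0 : coeff 0 Cc ≠ 0 := by
          intro h
          rw [h, map_zero] at hCconst
          exact hCne hCconst
        rw [hCconst]
        exact (isUnit_iff_ne_zero.mpr hc0).map (MvPolynomial.C : k →+* MvPolynomial (Fin n) k)
  have hprime : Prime A := UniqueFactorizationMonoid.irreducible_iff_prime.mp hirr
  -- A does not divide A'
  have hndvd : ¬ A ∣ A' := by
    rintro ⟨t, ht⟩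
    have htne : t ≠ 0 := by
      rintro rfl
      rw [mul_zero] at ht
      exact hA'ne ht
    have hmul := (leadExp_mul m hAne htne).1
    rw [← ht] at hmul
    have hsum' : (∑ l, leadExp m A' l) ≤ 1 := hsumA' _ (leadExp_mem_support m hA'ne)
    have htot : (∑ l, leadExp m A l) + (∑ l, leadExp m t l) ≤ 1 := by
      rw [← total_add, ← hmul]
      exact hsum'
    have ht0 : leadExp m t = 0 := total_eq_zero (by omega)
    obtain ⟨c, hcc⟩ : ∃ c, t = C c := ⟨_, leadExp_zero_constant m htne ht0⟩
    have hcne : c ≠ 0 := by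
      rintro rfl
      rw [map_zero] at hcc
      exact htne hcc
    have hc2 : coeff (Finsupp.single i2 1) A' = c * coeff (Finsupp.single i2 1) A := by
      rw [ht, hcc, mul_comm, coeff_C_mul]
    have hAc : coeff (Finsupp.single i2 1) A ≠ 0 := by
      rw [hcAe2]
      exact hfc
    rw [hA'2zero] at hc2
    exact (mul_ne_zero hcne hAc) hc2.symm
  -- conclude
  have hdvdf : A ∣ f := by
    rcases hprime.2.2 A' f ⟨f', hE0⟩ with h | h
    · exact absurd h hndvd
    · exact h
  obtain ⟨s, hs⟩ := hdvdf
  have hAnotP : A ∉ P := by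
    intro hAP
    obtain ⟨e, heG, hle⟩ := hleadG A hAP hAne
    have h2' := hT2A _ (leadExp_mem_support m hAne)
    have h3' := hGprop e heG
    have h4' := Finsupp.le_def.mp hle i0
    have h5' := Finsupp.le_def.mp hle i1
    omega
  have hsP : s ∈ P := by
    rcases hP.mem_or_mem (show A * s ∈ P from hs ▸ hfP) with h | h
    · exact absurd h hAnotP
    · exact h
  have hsne : s ≠ 0 := by
    rintro rfl
    rw [mul_zero] at hs
    exact hf0 hs
  have hmul := (leadExp_mul m hAne hsne).1
  rw [← hs, hlf] at hmul
  obtain ⟨e, heG, hle⟩ := hleadG s hsP hsne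
  have hle4 : leadExp m s ≤ Finsupp.single i0 1 + Finsupp.single i2 1 := by
    rw [hmul]
    exact le_add_self
  have he4 : e = Finsupp.single i0 1 + Finsupp.single i2 1 :=
    G5_min4 h0 h1 h2 h3 e heG (le_trans hle hle4)
  have hlse : leadExp m s = Finsupp.single i0 1 + Finsupp.single i2 1 :=
    le_antisymm hle4 (by rw [← he4]; exact hle)
  rw [hlse] at hmul
  exact hdAne (by simpa using hmul)

lemma borelJ (h0 : (i0:ℕ) = 0) (h1 : (i1:ℕ) = 1) (h2 : (i2:ℕ) = 2) (h3 : (i3:ℕ) = 3)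
    (J : Ideal (MvPolynomial (Fin n) k))
    (hJG : J = Ideal.span
      ((fun d => (monomial d (1:k) : MvPolynomial (Fin n) k)) '' (G5 i0 i1 i2 i3))) :
    IsBorelType J := by
  classical
  have Jmem : ∀ d : Fin n →₀ ℕ,
      ((monomial d (1:k) : MvPolynomial (Fin n) k) ∈ J ↔ ∃ e ∈ G5 i0 i1 i2 i3, e ≤ d) := by
    intro d
    rw [hJG]
    exact mem_monomialSpan_iff
  constructor
  · exact ⟨G5 i0 i1 i2 i3, hJG⟩
  · intro i j hij d hd hdj
    obtain ⟨e, heG, hle⟩ := (Jmem d).1 hd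
    have hled : ∀ a, e a ≤ d a := Finsupp.le_def.mp hle
    refine ⟨2, (Jmem _).2 ?_⟩
    by_cases hej : e j = 0
    · refine ⟨e, heG, Finsupp.le_def.mpr fun a => ?_⟩
      rw [Finsupp.tsub_apply, Finsupp.add_apply, Finsupp.single_apply, Finsupp.single_apply]
      have hda := hled a
      by_cases haj : j = a
      · rw [← haj]
        split_ifs <;> omega
      · rw [if_neg haj]
        split_ifs <;> omega
    · simp only [G5, Set.mem_insert_iff, Set.mem_singleton_iff] at heG
      have hij' := Fin.lt_def.mp hij
      rcases heG with rfl | rfl | rfl | rfl | rfl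
      · exfalso
        have hji : i0 = j := by
          by_contra hne'
          rw [Finsupp.single_apply, if_neg hne'] at hej
          exact hej rfl
        rw [← hji, h0] at hij'
        omega
      · -- e = x0 x1, so j = i1, i = i0; use x0^2
        have hji : i1 = j := by
          by_contra hne'
          by_cases hj0 : i0 = j
          · rw [← hj0, h0] at hij'; omega
          · rw [Finsupp.add_apply, Finsupp.single_apply, Finsupp.single_apply,
              if_neg hj0, if_neg hne'] at hej
            exact hej rfl
        rw [← hji, h1] at hij'
        have hii : i = i0 := Fin.ext (by rw [h0]; omega)
        refine ⟨Finsupp.single i0 2, by simp [G5], Finsupp.le_def.mpr fun a => ?_⟩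
        have hda := hled a
        rw [Finsupp.tsub_apply, Finsupp.add_apply, hii, ← hji]
        simp only [Finsupp.single_apply, Finsupp.add_apply] at hda ⊢
        split_ifs at hda ⊢ <;> omega
      · -- e = x1^2, so j = i1, i = i0; use x0 x1
        have hji : i1 = j := by
          by_contra hne'
          rw [Finsupp.single_apply, if_neg hne'] at hej
          exact hej rfl
        rw [← hji, h1] at hij'
        have hii : i = i0 := Fin.ext (by rw [h0]; omega)
        refine ⟨Finsupp.single i0 1 + Finsupp.single i1 1, by simp [G5],
          Finsupp.le_def.mpr fun a => ?_⟩
        have hda := hled a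
        rw [Finsupp.tsub_apply, Finsupp.add_apply, hii, ← hji]
        simp only [Finsupp.single_apply, Finsupp.add_apply] at hda ⊢
        split_ifs at hda ⊢ <;> omega
      · -- e = x0 x2, so j = i2, i = i0 or i1
        have hji : i2 = j := by
          by_contra hne'
          by_cases hj0 : i0 = j
          · rw [← hj0, h0] at hij'; omega
          · rw [Finsupp.add_apply, Finsupp.single_apply, Finsupp.single_apply,
              if_neg hj0, if_neg hne'] at hej
            exact hej rfl
        rw [← hji, h2] at hij'
        by_cases hi0 : (i:ℕ) = 0
        · have hii : i = i0 := Fin.ext (by rw [h0]; omega)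
          refine ⟨Finsupp.single i0 2, by simp [G5], Finsupp.le_def.mpr fun a => ?_⟩
          have hda := hled a
          rw [Finsupp.tsub_apply, Finsupp.add_apply, hii, ← hji]
          simp only [Finsupp.single_apply, Finsupp.add_apply] at hda ⊢
          split_ifs at hda ⊢ <;> omega
        · have hii : i = i1 := Fin.ext (by rw [h1]; omega)
          refine ⟨Finsupp.single i0 1 + Finsupp.single i1 1, by simp [G5],
            Finsupp.le_def.mpr fun a => ?_⟩
          have hda := hled a
          rw [Finsupp.tsub_apply, Finsupp.add_apply, hii, ← hji]
          simp only [Finsupp.single_apply, Finsupp.add_apply] at hda ⊢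
          split_ifs at hda ⊢ <;> omega
      · -- e = x0 x3, so j = i3, i = i0, i1 or i2
        have hji : i3 = j := by
          by_contra hne'
          by_cases hj0 : i0 = j
          · rw [← hj0, h0] at hij'; omega
          · rw [Finsupp.add_apply, Finsupp.single_apply, Finsupp.single_apply,
              if_neg hj0, if_neg hne'] at hej
            exact hej rfl
        rw [← hji, h3] at hij'
        by_cases hi0 : (i:ℕ) = 0
        · have hii : i = i0 := Fin.ext (by rw [h0]; omega)
          refine ⟨Finsupp.single i0 2, by simp [G5], Finsupp.le_def.mpr fun a => ?_⟩
          have hda := hled a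
          rw [Finsupp.tsub_apply, Finsupp.add_apply, hii, ← hji]
          simp only [Finsupp.single_apply, Finsupp.add_apply] at hda ⊢
          split_ifs at hda ⊢ <;> omega
        · by_cases hi1 : (i:ℕ) = 1
          · have hii : i = i1 := Fin.ext (by rw [h1]; omega)
            refine ⟨Finsupp.single i0 1 + Finsupp.single i1 1, by simp [G5],
              Finsupp.le_def.mpr fun a => ?_⟩
            have hda := hled a
            rw [Finsupp.tsub_apply, Finsupp.add_apply, hii, ← hji]
            simp only [Finsupp.single_apply, Finsupp.add_apply] at hda ⊢
            split_ifs at hda ⊢ <;> omega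
          · have hii : i = i2 := Fin.ext (by rw [h2]; omega)
            refine ⟨Finsupp.single i0 1 + Finsupp.single i2 1, by simp [G5],
              Finsupp.le_def.mpr fun a => ?_⟩
            have hda := hled a
            rw [Finsupp.tsub_apply, Finsupp.add_apply, hii, ← hji]
            simp only [Finsupp.single_apply, Finsupp.add_apply] at hda ⊢
            split_ifs at hda ⊢ <;> omega

end Stmt16Main

/-- For `n ≥ 4`, the ideal
`J = (x_1², x_1x_2, x_2², x_1x_3, x_1x_4)` is of Borel type, yet it is not the
initial ideal, with respect to the graded reverse lexicographic order, of any
homogeneous prime ideal of `k[x_1,…,x_n]`. -/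
theorem stmt16 {k : Type*} [Field k] [Infinite k] {n : ℕ} (hn : 4 ≤ n)
    (m : MonomialOrder (Fin n)) (hm : IsDegRevLex m)
    (J : Ideal (MvPolynomial (Fin n) k))
    (hJ : J = Ideal.span
      {(X (⟨0, by omega⟩ : Fin n) : MvPolynomial (Fin n) k) ^ 2,
        X (⟨0, by omega⟩ : Fin n) * X (⟨1, by omega⟩ : Fin n),
        X (⟨1, by omega⟩ : Fin n) ^ 2,
        X (⟨0, by omega⟩ : Fin n) * X (⟨2, by omega⟩ : Fin n),
        X (⟨0, by omega⟩ : Fin n) * X (⟨3, by omega⟩ : Fin n)}) :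
    IsBorelType J ∧
    ¬ ∃ P : Ideal (MvPolynomial (Fin n) k), P.IsPrime ∧ IsHomogIdeal P ∧
        initialIdeal m P = J := by
  classical
  have hXX : ∀ a b : Fin n, (X a * X b : MvPolynomial (Fin n) k)
      = monomial (Finsupp.single a 1 + Finsupp.single b 1) 1 := by
    intro a b
    rw [show (X a : MvPolynomial (Fin n) k) = monomial (Finsupp.single a 1) 1 from rfl,
      show (X b : MvPolynomial (Fin n) k) = monomial (Finsupp.single b 1) 1 from rfl,
      monomial_mul, one_mul]
  obtain ⟨i0, i1, i2, i3, h0, h1, h2, h3, hJG⟩ :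
      ∃ (i0 i1 i2 i3 : Fin n), (i0:ℕ) = 0 ∧ (i1:ℕ) = 1 ∧ (i2:ℕ) = 2 ∧ (i3:ℕ) = 3 ∧
        J = Ideal.span ((fun d => (monomial d (1:k) : MvPolynomial (Fin n) k)) ''
          (G5 i0 i1 i2 i3)) := by
    refine ⟨⟨0, by omega⟩, ⟨1, by omega⟩, ⟨2, by omega⟩, ⟨3, by omega⟩, rfl, rfl, rfl, rfl, ?_⟩
    rw [hJ]
    congr 1
    simp only [G5, Set.image_insert_eq, Set.image_singleton]
    rw [X_pow_eq_monomial, X_pow_eq_monomial, hXX, hXX, hXX]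
  exact ⟨borelJ h0 h1 h2 h3 J hJG, no_prime m hm h0 h1 h2 h3 J hJG⟩
end

section
/- Let J be a monomial ideal of Borel type in S = k[x_1,...,x_n] with dim(S/J) = d and c = n − d. Then the radical of J contains x_1,...,x_c and does not contain any of x_{c+1},...,x_n; equivalently, J contains pure powers of x_1,...,x_c but no pure power of x_{c+1},...,x_n. -/
open MvPolynomial Finsupp Module

open Paper MvPolynomial



lemma exists_algDep {K : Type*} [Field K] {m s : ℕ} (hms : m < s)
    (f : Fin s → MvPolynomial (Fin m) K) :
    ∃ Q : MvPolynomial (Fin s) K, Q ≠ 0 ∧ aeval f Q = 0 := by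
  classical
  set D := (Finset.univ.sup fun i => (f i).totalDegree) + 1 with hD
  set M := s * D + 1 with hM
  set t := M ^ m with ht
  set T := s * t * D with hT
  have ht1 : 1 ≤ t := Nat.one_le_pow _ _ (by omega)
  set g : (Fin s → Fin (t+1)) → MvPolynomial (Fin m) K :=
    fun a => ∏ i : Fin s, f i ^ (a i : ℕ) with hg
  have hdeg : ∀ a, (g a).totalDegree ≤ T := by
    intro a
    calc (g a).totalDegree ≤ ∑ i : Fin s, (f i ^ (a i : ℕ)).totalDegree :=
          totalDegree_finset_prod _ _
      _ ≤ ∑ i : Fin s, t * D := by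
          refine Finset.sum_le_sum fun i _ => ?_
          refine (totalDegree_pow _ _).trans ?_
          have h1 : (a i : ℕ) ≤ t := by omega
          have h2 : (f i).totalDegree ≤ D := by
            have h3 : (f i).totalDegree ≤ Finset.univ.sup fun i => (f i).totalDegree :=
              Finset.le_sup (f := fun i => (f i).totalDegree) (Finset.mem_univ i)
            omega
          exact Nat.mul_le_mul h1 h2
      _ = T := by simp [hT]; ring
  set Bf : Finset (Fin m →₀ ℕ) :=
    Finset.univ.image (fun b : Fin m → Fin (T+1) =>
      Finsupp.equivFunOnFinite.symm fun i => (b i : ℕ)) with hBf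
  set Mon : Finset (MvPolynomial (Fin m) K) :=
    Bf.image (fun β => (monomial β (1:K))) with hMon
  set W : Submodule K (MvPolynomial (Fin m) K) := Submodule.span K (Mon : Set _) with hW
  have hmem : ∀ a, g a ∈ W := by
    intro a
    rw [as_sum (g a)]
    refine Submodule.sum_mem _ fun β hβ => ?_
    have hβT : ∀ i, β i ≤ T := by
      intro i
      have h1 : β i ≤ β.sum fun _ e => e := by
        by_cases h : β i = 0
        · omega
        · exact Finset.single_le_sum (f := fun j => β j) (fun _ _ => Nat.zero_le _)
            (Finsupp.mem_support_iff.2 h)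
      have h2 := le_totalDegree hβ
      exact h1.trans (h2.trans (hdeg a))
    have hβBf : β ∈ Bf := by
      refine Finset.mem_image.2 ⟨fun i => ⟨β i, by have := hβT i; omega⟩, Finset.mem_univ _, ?_⟩
      simpa using Finsupp.equivFunOnFinite_symm_coe β
    have : (monomial β (1:K)) ∈ W :=
      Submodule.subset_span (Finset.mem_coe.2 (Finset.mem_image_of_mem _ hβBf))
    have := W.smul_mem (coeff β (g a)) this
    simpa [smul_monomial] using this
  have hnli : ¬ LinearIndependent K g := by
    intro hli
    set g' : (Fin s → Fin (t+1)) → W := fun a => ⟨g a, hmem a⟩ with hg'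
    have hli' : LinearIndependent K g' := by
      refine LinearIndependent.of_comp W.subtype ?_
      convert hli
      rfl
    have hcard := hli'.fintype_card_le_finrank
    have hrank : Module.finrank K W ≤ (T+1)^m := by
      refine le_trans (finrank_span_finset_le_card (R := K) Mon) ?_
      calc Mon.card ≤ Bf.card := Finset.card_image_le
        _ ≤ (Finset.univ : Finset (Fin m → Fin (T+1))).card := Finset.card_image_le
        _ = (T+1)^m := by simp [Fintype.card_fun]
    have hcard2 : Fintype.card (Fin s → Fin (t+1)) = (t+1)^s := by
      simp [Fintype.card_fun]
    have hnum : (T+1)^m < (t+1)^s := by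
      have h1 : T + 1 ≤ M * t := by
        have : s * t * D + 1 ≤ s * D * t + t := by nlinarith
        calc T + 1 = s * t * D + 1 := by rw [hT]
          _ ≤ s * D * t + t := this
          _ = M * t := by rw [hM]; ring
      calc (T+1)^m ≤ (M*t)^m := Nat.pow_le_pow_left h1 m
        _ = t * t^m := by rw [mul_pow, ← ht]
        _ = t^(m+1) := by ring
        _ ≤ t^s := Nat.pow_le_pow_right (by omega) (by omega)
        _ < (t+1)^s := Nat.pow_lt_pow_left (by omega) (by omega)
    omega
  obtain ⟨c, hsum, a₀, ha₀⟩ := Fintype.not_linearIndependent_iff.1 hnli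
  set exp : (Fin s → Fin (t+1)) → (Fin s →₀ ℕ) :=
    fun a => Finsupp.equivFunOnFinite.symm (fun i => (a i : ℕ)) with hexp
  have hexp_apply : ∀ a i, exp a i = (a i : ℕ) := fun a i => rfl
  have hexp_inj : Function.Injective exp := by
    intro a b hab
    funext i
    have := congrFun (congrArg (fun v : Fin s →₀ ℕ => (v : Fin s → ℕ)) hab) i
    simpa [hexp_apply] using Fin.val_injective this
  refine ⟨∑ a, monomial (exp a) (c a), ?_, ?_⟩
  · intro h0
    have : coeff (exp a₀) (∑ a, monomial (exp a) (c a)) = c a₀ := by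
      rw [coeff_sum]
      rw [Finset.sum_eq_single a₀]
      · simp [coeff_monomial]
      · intro b _ hb
        rw [coeff_monomial, if_neg (fun h => hb (hexp_inj h))]
      · simp
    rw [h0] at this
    simp at this
    exact ha₀ this.symm
  · rw [map_sum]
    have : ∀ a, aeval f (monomial (exp a) (c a)) = c a • g a := by
      intro a
      rw [aeval_monomial, Algebra.smul_def]
      congr 1
      rw [Finsupp.prod_pow]
      exact Finset.prod_congr rfl fun i _ => by rw [hexp_apply]
    simp_rw [this]
    exact hsum

lemma chain_lemma {R : Type*} [CommRing R] (s : ℕ) (q : ℕ → Ideal R)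
    (hq : ∀ i ≤ s, (q i).IsPrime) (hmono : ∀ i, i + 1 ≤ s → q i ≤ q (i+1))
    (f a : ℕ → R) (k : ℕ → ℕ) (e : R) (he : IsUnit e)
    (hf1 : ∀ i < s, f i ∈ q (i+1)) (hf2 : ∀ i < s, f i ∉ q i)
    (h0 : (∏ i ∈ Finset.range s, f i ^ k i) * e
        + ∑ j ∈ Finset.range s, (∏ i ∈ Finset.range j, f i ^ k i) * (f j ^ (k j + 1) * a j)
        ∈ q 0) :
    False := by
  have claim : ∀ v u, u + v = s →
      ((∏ i ∈ Finset.Ico u s, f i ^ k i) * e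
        + ∑ j ∈ Finset.Ico u s, (∏ i ∈ Finset.Ico u j, f i ^ k i) * (f j ^ (k j + 1) * a j))
        ∈ q u → False := by
    intro v
    induction v with
    | zero =>
      intro u hu hmem
      subst hu
      simp only [Nat.add_zero, Finset.Ico_self, Finset.prod_empty, Finset.sum_empty, one_mul,
        add_zero] at hmem
      exact (hq u le_rfl).ne_top (Ideal.eq_top_of_isUnit_mem _ hmem he)
    | succ v ih =>
      intro u hu hmem
      have hus : u < s := by omega
      have hp : ∀ j ∈ Finset.Ico (u+1) s,
          (∏ i ∈ Finset.Ico u j, f i ^ k i) * (f j ^ (k j + 1) * a j)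
          = f u ^ k u * ((∏ i ∈ Finset.Ico (u+1) j, f i ^ k i) * (f j ^ (k j + 1) * a j)) := by
        intro j hj
        rw [Finset.prod_eq_prod_Ico_succ_bot (Finset.mem_Ico.1 hj).1]
        ring
      have hidW : (∏ i ∈ Finset.Ico u s, f i ^ k i) * e
          + ∑ j ∈ Finset.Ico u s, (∏ i ∈ Finset.Ico u j, f i ^ k i) * (f j ^ (k j + 1) * a j)
          = f u ^ k u *
            (((∏ i ∈ Finset.Ico (u+1) s, f i ^ k i) * e
              + ∑ j ∈ Finset.Ico (u+1) s,
                  (∏ i ∈ Finset.Ico (u+1) j, f i ^ k i) * (f j ^ (k j + 1) * a j))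
             + f u * a u) := by
        rw [Finset.prod_eq_prod_Ico_succ_bot hus, Finset.sum_eq_sum_Ico_succ_bot hus,
          Finset.sum_congr rfl hp, ← Finset.mul_sum, Finset.Ico_self, Finset.prod_empty]
        ring
      rw [hidW] at hmem
      have hqu := hq u (by omega)
      have h1 : ((∏ i ∈ Finset.Ico (u+1) s, f i ^ k i) * e
              + ∑ j ∈ Finset.Ico (u+1) s,
                  (∏ i ∈ Finset.Ico (u+1) j, f i ^ k i) * (f j ^ (k j + 1) * a j))
             + f u * a u ∈ q u := by
        rcases hqu.mem_or_mem hmem with h | h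
        · exact absurd (hqu.mem_of_pow_mem _ h) (hf2 u hus)
        · exact h
      have h2 : ((∏ i ∈ Finset.Ico (u+1) s, f i ^ k i) * e
              + ∑ j ∈ Finset.Ico (u+1) s,
                  (∏ i ∈ Finset.Ico (u+1) j, f i ^ k i) * (f j ^ (k j + 1) * a j)) ∈ q (u+1) := by
        have h3 := hmono u (by omega) h1
        have h4 : f u * a u ∈ q (u+1) := Ideal.mul_mem_right _ _ (hf1 u hus)
        simpa using Ideal.sub_mem _ h3 h4
      exact ih (u+1) (by omega) h2
  simp only [Finset.range_eq_Ico] at h0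
  exact claim s 0 (by omega) h0

lemma decomp_s18 {K R : Type*} [Field K] [CommRing R] [Algebra K R] {s : ℕ}
    (Q : MvPolynomial (Fin s) K) (hQ : Q ≠ 0) (f : ℕ → R) :
    ∃ (k : ℕ → ℕ) (a : ℕ → R) (c : K), c ≠ 0 ∧
      (∏ i ∈ Finset.range s, f i ^ k i) * algebraMap K R c
        + ∑ j ∈ Finset.range s, (∏ i ∈ Finset.range j, f i ^ k i) * (f j ^ (k j + 1) * a j)
        = aeval (fun i : Fin s => f (i : ℕ)) Q := by
  classical
  set F : Fin s → R := fun i => f (i : ℕ) with hF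
  have hsupp : Q.support.Nonempty := by
    rw [Finset.nonempty_iff_ne_empty, Ne, MvPolynomial.support_eq_empty]; exact hQ
  set L : Finset (Lex (Fin s →₀ ℕ)) := Q.support.image toLex with hL
  have hLne : L.Nonempty := hsupp.image _
  obtain ⟨μ, hμsupp, hμeq⟩ := Finset.mem_image.1 (L.min'_mem hLne)
  have hμmin : ∀ α ∈ Q.support, toLex μ ≤ toLex α := by
    intro α hα
    rw [hμeq]
    exact Finset.min'_le _ _ (Finset.mem_image_of_mem _ hα)
  -- first-difference index
  have hdiff : ∀ α ∈ Q.support, α ≠ μ → ∃ j : Fin s,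
      (∀ i, i < j → α i = μ i) ∧ μ j < α j := by
    intro α hα hne
    have hne' : toLex μ ≠ toLex α := by
      intro h; exact hne (by simpa using h.symm)
    have hlt : toLex μ < toLex α := lt_of_le_of_ne (hμmin α hα) hne'
    obtain ⟨i, hi1, hi2⟩ := Finsupp.Lex.lt_iff.1 hlt
    simp only [ofLex_toLex] at hi1 hi2
    set Df : Finset (Fin s) := Finset.univ.filter (fun i => α i ≠ μ i) with hDf
    have hDfne : Df.Nonempty := ⟨i, by simp [hDf]; omega⟩
    set j := Df.min' hDfne with hj
    have hjmem : j ∈ Df := Df.min'_mem hDfne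
    have hjne : α j ≠ μ j := by
      have := hjmem; rw [hDf] at this; simpa using this
    refine ⟨j, ?_, ?_⟩
    · intro i' hi'
      by_contra hcon
      have : j ≤ i' := Df.min'_le i' (by simp [hDf, hcon])
      omega
    · -- the lex witness i equals j
      have hji : j ≤ i := Df.min'_le i (by simp [hDf]; omega)
      rcases eq_or_lt_of_le hji with h | h
      · rw [h]; exact hi2
      · exact absurd (hi1 j h).symm hjne
  set T : Fin s → Finset (Fin s →₀ ℕ) := fun j =>
    (Q.support.erase μ).filter (fun α => (∀ i, i < j → α i = μ i) ∧ μ j < α j) with hT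
  have hpart : Q.support.erase μ = Finset.univ.biUnion T := by
    ext α
    simp only [Finset.mem_biUnion, Finset.mem_univ, true_and, hT, Finset.mem_filter]
    constructor
    · intro hα
      have hαs : α ∈ Q.support := Finset.mem_of_mem_erase hα
      have hαne : α ≠ μ := Finset.ne_of_mem_erase hα
      obtain ⟨j, h1, h2⟩ := hdiff α hαs hαne
      exact ⟨j, hα, h1, h2⟩
    · rintro ⟨j, hα, -⟩; exact hα
  have hdisj : ((Finset.univ : Finset (Fin s)) : Set (Fin s)).PairwiseDisjoint T := by
    intro j _ j' _ hne
    simp only [Function.onFun]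
    rw [Finset.disjoint_left]
    intro α hαj hαj'
    rw [hT] at hαj hαj'
    simp only [Finset.mem_filter] at hαj hαj'
    rcases lt_trichotomy j j' with h | h | h
    · exact absurd (hαj'.2.1 j h) (by omega)
    · exact hne h
    · exact absurd (hαj.2.1 j' h) (by omega)
  have hprodU : ∀ α : Fin s →₀ ℕ, (∏ i ∈ α.support, F i ^ α i) = ∏ i : Fin s, F i ^ α i := by
    intro α
    refine Finset.prod_subset (Finset.subset_univ _) (fun i _ hi => ?_)
    rw [Finsupp.notMem_support_iff.1 hi, pow_zero]
  have heval : aeval F Q = ∑ α ∈ Q.support, algebraMap K R (coeff α Q) * ∏ i : Fin s, F i ^ α i := by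
    rw [aeval_def, eval₂_eq]
    exact Finset.sum_congr rfl fun α _ => by rw [hprodU]
  set a' : Fin s → R := fun j => ∑ α ∈ T j, algebraMap K R (coeff α Q) *
      (F j ^ (α j - μ j - 1) * ∏ i ∈ Finset.univ.filter (fun i => j < i), F i ^ α i) with ha'
  have hterm : ∀ j : Fin s, ∀ α ∈ T j, (∏ i : Fin s, F i ^ α i)
      = (∏ i ∈ Finset.univ.filter (fun i => i < j), F i ^ μ i) *
        (F j ^ (μ j + 1) * (F j ^ (α j - μ j - 1) *
          ∏ i ∈ Finset.univ.filter (fun i => j < i), F i ^ α i)) := by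
    intro j α hα
    rw [hT] at hα
    simp only [Finset.mem_filter] at hα
    obtain ⟨-, h1, h2⟩ := hα
    rw [← Finset.prod_filter_mul_prod_filter_not Finset.univ (fun i => i < j) (fun i => F i ^ α i)]
    have e1 : (∏ i ∈ Finset.univ.filter (fun i => i < j), F i ^ α i)
        = ∏ i ∈ Finset.univ.filter (fun i => i < j), F i ^ μ i := by
      refine Finset.prod_congr rfl fun i hi => ?_
      rw [h1 i (by simpa using hi)]
    have e2 : Finset.univ.filter (fun i : Fin s => ¬ i < j)
        = insert j (Finset.univ.filter (fun i => j < i)) := by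
      ext i
      simp only [Finset.mem_filter, Finset.mem_univ, true_and, Finset.mem_insert, not_lt]
      constructor
      · intro h; rcases eq_or_lt_of_le h with h' | h'
        · exact Or.inl h'.symm
        · exact Or.inr h'
      · rintro (rfl | h)
        · exact le_rfl
        · exact le_of_lt h
    have e3 : F j ^ α j = F j ^ (μ j + 1) * F j ^ (α j - μ j - 1) := by
      rw [← pow_add]
      congr 1
      omega
    rw [e1, e2, Finset.prod_insert (by simp), e3]
    ring
  have hsumTj : ∀ j : Fin s,
      (∑ α ∈ T j, algebraMap K R (coeff α Q) * ∏ i : Fin s, F i ^ α i)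
      = (∏ i ∈ Finset.univ.filter (fun i => i < j), F i ^ μ i) *
        (F j ^ (μ j + 1) * a' j) := by
    intro j
    rw [ha', Finset.mul_sum, Finset.mul_sum]
    refine Finset.sum_congr rfl fun α hα => ?_
    rw [hterm j α hα]
    ring
  have hmain : aeval F Q = algebraMap K R (coeff μ Q) * ∏ i : Fin s, F i ^ μ i
      + ∑ j : Fin s, (∏ i ∈ Finset.univ.filter (fun i => i < j), F i ^ μ i) *
          (F j ^ (μ j + 1) * a' j) := by
    rw [heval, ← Finset.insert_erase hμsupp, Finset.sum_insert (Finset.notMem_erase _ _),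
      hpart, Finset.sum_biUnion hdisj]
    congr 1
    exact Finset.sum_congr rfl fun j _ => hsumTj j
  -- convert to range form
  refine ⟨fun i => if h : i < s then μ ⟨i, h⟩ else 0,
          fun j => if h : j < s then a' ⟨j, h⟩ else 0,
          coeff μ Q, Finsupp.mem_support_iff.1 hμsupp, ?_⟩
  set k : ℕ → ℕ := fun i => if h : i < s then μ ⟨i, h⟩ else 0 with hk
  set aa : ℕ → R := fun j => if h : j < s then a' ⟨j, h⟩ else 0 with haa
  have hkv : ∀ i : Fin s, k (i : ℕ) = μ i := by
    intro i; rw [hk]; simp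
  have haav : ∀ j : Fin s, aa (j : ℕ) = a' j := by
    intro j; rw [haa]; simp
  have hGv : ∀ i : Fin s, f (i : ℕ) ^ k (i : ℕ) = F i ^ μ i := by
    intro i; rw [hkv, hF]
  have c1 : (∏ i ∈ Finset.range s, f i ^ k i) = ∏ i : Fin s, F i ^ μ i := by
    rw [← Fin.prod_univ_eq_prod_range (fun i => f i ^ k i) s]
    exact Finset.prod_congr rfl fun i _ => hGv i
  have c2 : ∀ j : Fin s, (∏ i ∈ Finset.range (j : ℕ), f i ^ k i)
      = ∏ i ∈ Finset.univ.filter (fun i => i < j), F i ^ μ i := by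
    intro j
    have e1 : Finset.range (j : ℕ) = (Finset.range s).filter (fun i => i < (j : ℕ)) := by
      ext i
      simp only [Finset.mem_range, Finset.mem_filter]
      have := j.isLt
      omega
    rw [e1, Finset.prod_filter, ← Fin.prod_univ_eq_prod_range
      (fun i => if i < (j : ℕ) then f i ^ k i else 1) s, Finset.prod_filter]
    refine Finset.prod_congr rfl fun i _ => ?_
    simp only [Fin.lt_iff_val_lt_val]
    by_cases h : (i : ℕ) < (j : ℕ)
    · rw [if_pos h, if_pos h, hGv]
    · rw [if_neg h, if_neg h]
  have c3 : (∑ j ∈ Finset.range s, (∏ i ∈ Finset.range j, f i ^ k i) * (f j ^ (k j + 1) * aa j))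
      = ∑ j : Fin s, (∏ i ∈ Finset.univ.filter (fun i => i < j), F i ^ μ i) *
          (F j ^ (μ j + 1) * a' j) := by
    rw [← Fin.sum_univ_eq_sum_range (fun j => (∏ i ∈ Finset.range j, f i ^ k i) *
      (f j ^ (k j + 1) * aa j)) s]
    refine Finset.sum_congr rfl fun j _ => ?_
    rw [c2 j, hkv, haav, hF]
  rw [c1, c3, hmain]
  ring

section KerPhi
variable (K : Type*) [Field K]

noncomputable def phiMap (n c : ℕ) (hc : c ≤ n) :
    MvPolynomial (Fin n) K →ₐ[K] MvPolynomial (Fin (n - c)) K :=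
  aeval (fun i : Fin n =>
    if h : (i : ℕ) < c then 0 else X (⟨(i : ℕ) - c, by omega⟩ : Fin (n - c)))

noncomputable def psiMap (n c : ℕ) (hc : c ≤ n) :
    MvPolynomial (Fin (n - c)) K →ₐ[K] MvPolynomial (Fin n) K :=
  rename (fun j : Fin (n - c) => (⟨c + (j : ℕ), by omega⟩ : Fin n))

noncomputable def Pvar (n c : ℕ) : Ideal (MvPolynomial (Fin n) K) :=
  Ideal.span ((fun i : Fin n => (X i : MvPolynomial (Fin n) K)) '' {i | (i : ℕ) < c})

variable {K}

lemma phi_comp_psi (n c : ℕ) (hc : c ≤ n) :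
    (phiMap K n c hc).comp (psiMap K n c hc) = AlgHom.id K _ := by
  refine algHom_ext fun j => ?_
  simp only [AlgHom.comp_apply, psiMap, rename_X, phiMap, aeval_X, AlgHom.id_apply]
  rw [dif_neg (by omega)]
  congr 1
  ext
  simp

lemma phi_surjective (n c : ℕ) (hc : c ≤ n) : Function.Surjective (phiMap K n c hc) := by
  intro y
  exact ⟨psiMap K n c hc y, by
    have := congrArg (fun f : MvPolynomial (Fin (n-c)) K →ₐ[K] MvPolynomial (Fin (n-c)) K => f y)
      (phi_comp_psi n c hc)
    simpa using this⟩

lemma ker_phi (n c : ℕ) (hc : c ≤ n) :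
    RingHom.ker (phiMap K n c hc) = Pvar K n c := by
  apply le_antisymm
  · intro g hg
    have key : ∀ g : MvPolynomial (Fin n) K,
        g - psiMap K n c hc (phiMap K n c hc g) ∈ Pvar K n c := by
      intro g
      induction g using MvPolynomial.induction_on with
      | C a =>
        rw [show (C a : MvPolynomial (Fin n) K) = algebraMap K _ a from rfl]
        rw [AlgHom.commutes, AlgHom.commutes]
        simp
      | add p q hp hq =>
        have : p + q - psiMap K n c hc (phiMap K n c hc (p + q))
            = (p - psiMap K n c hc (phiMap K n c hc p))
              + (q - psiMap K n c hc (phiMap K n c hc q)) := by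
          rw [map_add, map_add]; ring
        rw [this]
        exact Ideal.add_mem _ hp hq
      | mul_X p i hp =>
        by_cases h : (i : ℕ) < c
        · have hXi : (X i : MvPolynomial (Fin n) K) ∈ Pvar K n c :=
            Ideal.subset_span ⟨i, h, rfl⟩
          have h1 : phiMap K n c hc (X i) = 0 := by
            simp only [phiMap, aeval_X]
            rw [dif_pos h]
          rw [map_mul, h1, mul_zero, map_zero, sub_zero]
          exact Ideal.mul_mem_left _ _ hXi
        · have h1 : psiMap K n c hc (phiMap K n c hc (X i)) = X i := by
            simp only [phiMap, aeval_X]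
            rw [dif_neg h]
            simp only [psiMap, rename_X]
            congr 1
            ext
            simp
            omega
          have : p * X i - psiMap K n c hc (phiMap K n c hc (p * X i))
              = (p - psiMap K n c hc (phiMap K n c hc p)) * X i := by
            rw [map_mul, map_mul, h1]; ring
          rw [this]
          exact Ideal.mul_mem_right _ _ hp
    have hg0 : phiMap K n c hc g = 0 := hg
    have := key g
    rwa [hg0, map_zero, sub_zero] at this
  · rw [Pvar, Ideal.span_le]
    rintro - ⟨i, hi, rfl⟩
    simp only [Set.mem_setOf_eq] at hi
    have : phiMap K n c hc (X i) = 0 := by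
      simp only [phiMap, aeval_X]
      rw [dif_pos hi]
    exact this

lemma Pvar_isPrime (n c : ℕ) (hc : c ≤ n) : (Pvar K n c).IsPrime := by
  rw [← ker_phi n c hc]
  exact RingHom.ker_isPrime _

lemma X_mem_Pvar_iff (n c : ℕ) (hc : c ≤ n) (i : Fin n) :
    (X i : MvPolynomial (Fin n) K) ∈ Pvar K n c ↔ (i : ℕ) < c := by
  constructor
  · intro h
    by_contra hlt
    rw [← ker_phi n c hc] at h
    have h1 : phiMap K n c hc (X i) = 0 := h
    rw [phiMap, aeval_X, dif_neg hlt] at h1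
    exact X_ne_zero _ h1
  · intro h
    exact Ideal.subset_span ⟨i, h, rfl⟩

lemma quot_Pvar_equiv (n c : ℕ) (hc : c ≤ n) :
    ringKrullDim (MvPolynomial (Fin n) K ⧸ Pvar K n c)
      = ringKrullDim (MvPolynomial (Fin (n - c)) K) := by
  rw [← ker_phi n c hc]
  exact ringKrullDim_eq_of_ringEquiv
    (Ideal.quotientKerAlgEquivOfSurjective (phi_surjective n c hc)).toRingEquiv

end KerPhi
theorem ringKrullDim_mvPolynomial_fin (K : Type*) [Field K] (m : ℕ) :
    ringKrullDim (MvPolynomial (Fin m) K) = (m : WithBot (WithTop ℕ)) := by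
  apply le_antisymm
  · rw [ringKrullDim]
    refine iSup_le fun p => ?_
    have hlen : p.length ≤ m := by
      by_contra hcon
      push_neg at hcon
      set s := m + 1 with hs
      have hsl : s ≤ p.length := by omega
      set q : ℕ → Ideal (MvPolynomial (Fin m) K) :=
        fun i => (p ⟨min i p.length, by omega⟩).asIdeal with hqdef
      have hqprime : ∀ i ≤ s, (q i).IsPrime := fun i _ => (p _).2
      have hqlt : ∀ i, i + 1 ≤ s → q i < q (i+1) := by
        intro i hi
        have h1 : min i p.length = i := by omega
        have h2 : min (i+1) p.length = i + 1 := by omega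
        have := p.strictMono (show (⟨min i p.length, by omega⟩ : Fin (p.length + 1))
          < ⟨min (i+1) p.length, by omega⟩ by rw [Fin.mk_lt_mk]; omega)
        exact this
      have hex : ∀ i, i < s → ∃ x, x ∈ q (i+1) ∧ x ∉ q i :=
        fun i hi => SetLike.exists_of_lt (hqlt i hi)
      set f : ℕ → MvPolynomial (Fin m) K :=
        fun i => if h : i < s then (hex i h).choose else 0 with hfdef
      have hf1 : ∀ i, i < s → f i ∈ q (i+1) := by
        intro i hi
        rw [hfdef]
        simp only [dif_pos hi]
        exact (hex i hi).choose_spec.1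
      have hf2 : ∀ i, i < s → f i ∉ q i := by
        intro i hi
        rw [hfdef]
        simp only [dif_pos hi]
        exact (hex i hi).choose_spec.2
      obtain ⟨Q, hQ, hQ0⟩ := exists_algDep (show m < s by omega)
        (fun i : Fin s => f (i : ℕ))
      obtain ⟨k, a, cc, hcc, heq⟩ := decomp_s18 Q hQ f
      refine chain_lemma s q hqprime (fun i hi => (hqlt i hi).le) f a k
        (algebraMap K _ cc) ?_ hf1 hf2 ?_
      · exact (isUnit_iff_ne_zero.2 hcc).map (algebraMap K _)
      · rw [heq, hQ0]
        exact (q 0).zero_mem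
    exact WithBot.coe_le_coe.2 (ENat.coe_le_coe.2 hlen)
  · have hpr : ∀ j : Fin (m+1), (Pvar K m (j : ℕ)).IsPrime :=
      fun j => Pvar_isPrime m (j : ℕ) (by omega)
    have hstep : ∀ j : Fin m,
        (⟨Pvar K m ((Fin.castSucc j : Fin (m+1)) : ℕ), hpr _⟩
          : PrimeSpectrum (MvPolynomial (Fin m) K))
        < ⟨Pvar K m ((Fin.succ j : Fin (m+1)) : ℕ), hpr _⟩ := by
      intro j
      have hle : Pvar K m ((Fin.castSucc j : Fin (m+1)) : ℕ)
          ≤ Pvar K m ((Fin.succ j : Fin (m+1)) : ℕ) := by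
        apply Ideal.span_mono
        apply Set.image_mono
        intro i hi
        simp only [Set.mem_setOf_eq] at hi ⊢
        simp only [Fin.coe_castSucc] at hi
        simp only [Fin.val_succ]
        omega
      have hmem : (MvPolynomial.X ⟨(j : ℕ), j.isLt⟩ : MvPolynomial (Fin m) K)
          ∈ Pvar K m ((Fin.succ j : Fin (m+1)) : ℕ) := by
        rw [X_mem_Pvar_iff m _ (by omega)]
        simp
      have hnmem : (MvPolynomial.X ⟨(j : ℕ), j.isLt⟩ : MvPolynomial (Fin m) K)
          ∉ Pvar K m ((Fin.castSucc j : Fin (m+1)) : ℕ) := by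
        rw [X_mem_Pvar_iff m _ (by omega)]
        simp
      have : Pvar K m ((Fin.castSucc j : Fin (m+1)) : ℕ)
          < Pvar K m ((Fin.succ j : Fin (m+1)) : ℕ) :=
        lt_of_le_of_ne hle (fun he => hnmem (he ▸ hmem))
      exact this
    set ser : LTSeries (PrimeSpectrum (MvPolynomial (Fin m) K)) :=
      ⟨m, fun j => ⟨Pvar K m (j : ℕ), hpr j⟩, hstep⟩ with hser
    rw [ringKrullDim]
    have := Order.LTSeries.length_le_krullDim ser
    exact this
lemma ringKrullDim_quot_eq_of_radical_eq {R : Type*} [CommRing R] (J P : Ideal R)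
    (hP : P.IsPrime) (hrad : J.radical = P) :
    ringKrullDim (R ⧸ J) = ringKrullDim (R ⧸ P) := by
  classical
  have hJP : J ≤ P := hrad ▸ Ideal.le_radical
  apply le_antisymm
  · have hcomap : ∀ pp : PrimeSpectrum (R ⧸ J),
        P ≤ Ideal.comap (Ideal.Quotient.mk J) pp.asIdeal := by
      intro pp
      have h1 : J ≤ Ideal.comap (Ideal.Quotient.mk J) pp.asIdeal := by
        exact le_trans (le_of_eq Ideal.mk_ker.symm) (Ideal.ker_le_comap _)
      have h2 : (Ideal.comap (Ideal.Quotient.mk J) pp.asIdeal).IsPrime :=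
        Ideal.IsPrime.comap _
      rw [← hrad]
      exact (Ideal.IsPrime.radical_le_iff h2).2 h1
    set Gm : PrimeSpectrum (R ⧸ J) → PrimeSpectrum (R ⧸ P) := fun pp =>
      ⟨Ideal.map (Ideal.Quotient.mk P) (Ideal.comap (Ideal.Quotient.mk J) pp.asIdeal),
        Ideal.map_isPrime_of_surjective Ideal.Quotient.mk_surjective
          (by rw [Ideal.mk_ker]; exact hcomap pp)⟩ with hGm
    have hGmono : StrictMono Gm := by
      intro pp qq hlt
      have h1 : Ideal.comap (Ideal.Quotient.mk J) pp.asIdeal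
          < Ideal.comap (Ideal.Quotient.mk J) qq.asIdeal := by
        refine lt_of_le_of_ne (Ideal.comap_mono hlt.le) ?_
        intro he
        have := Ideal.comap_injective_of_surjective _ Ideal.Quotient.mk_surjective he
        exact hlt.ne (PrimeSpectrum.ext this)
      have hsup : ∀ pp : PrimeSpectrum (R ⧸ J),
          Ideal.comap (Ideal.Quotient.mk P)
            (Ideal.map (Ideal.Quotient.mk P) (Ideal.comap (Ideal.Quotient.mk J) pp.asIdeal))
          = Ideal.comap (Ideal.Quotient.mk J) pp.asIdeal := by
        intro pp
        rw [Ideal.comap_map_of_surjective _ Ideal.Quotient.mk_surjective,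
          ← RingHom.ker_eq_comap_bot, Ideal.mk_ker]
        exact sup_eq_left.2 (hcomap pp)
      show Gm pp < Gm qq
      refine lt_of_le_of_ne ?_ ?_
      · exact Ideal.map_mono h1.le
      · intro he
        have h2 : Gm pp = Gm qq := he
        have h3 := congrArg (fun x : PrimeSpectrum (R ⧸ P) =>
          Ideal.comap (Ideal.Quotient.mk P) x.asIdeal) h2
        simp only [hGm] at h3
        rw [hsup pp, hsup qq] at h3
        exact h1.ne h3
    exact Order.krullDim_le_of_strictMono Gm hGmono
  · have hsurj : Function.Surjective (Ideal.Quotient.factor hJP) := by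
      have h1 : Function.Surjective
          ((Ideal.Quotient.factor hJP).comp (Ideal.Quotient.mk J)) := by
        rw [Ideal.Quotient.factor_comp_mk]
        exact Ideal.Quotient.mk_surjective
      rw [RingHom.coe_comp] at h1
      exact h1.of_comp
    exact ringKrullDim_le_of_surjective _ hsurj

/-- For a Borel-type monomial ideal `J` with `dim(S/J) = d` and
`c = n − d`, the radical of `J` contains exactly the variables `x_1,…,x_c`;
equivalently, `J` contains a pure power of `x_i` exactly when `i ≤ c`. -/
theorem stmt18 {k : Type*} [Field k] {n : ℕ}
    (J : Ideal (MvPolynomial (Fin n) k)) (hB : IsBorelType J)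
    (d : ℕ) (hd : qdim J = (d : WithBot (WithTop ℕ))) :
    (∀ i : Fin n, (X i : MvPolynomial (Fin n) k) ∈ J.radical ↔ (i : ℕ) < n - d) ∧
    (∀ i : Fin n, (i : ℕ) < n - d ↔ ∃ e : ℕ, 0 < e ∧ (X i : MvPolynomial (Fin n) k) ^ e ∈ J) := by
  classical
  obtain ⟨⟨G, hG⟩, hBC⟩ := hB
  -- J is a proper ideal
  have hproper : J ≠ ⊤ := by
    intro h
    rw [Paper.qdim, h] at hd
    rw [ringKrullDim_eq_bot_of_subsingleton] at hd
    exact WithBot.bot_ne_coe hd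
  have hone : (1 : MvPolynomial (Fin n) k) ∉ J :=
    fun h => hproper ((Ideal.eq_top_iff_one _).2 h)
  -- Lemma A : from a monomial in J produce a pure power of the minimal variable
  have lemA : ∀ (N : ℕ) (dd : Fin n →₀ ℕ) (mi : Fin n),
      (∑ i ∈ Finset.univ.erase mi, dd i) ≤ N →
      (∀ i, dd i ≠ 0 → mi ≤ i) → dd mi ≠ 0 →
      (monomial dd (1:k) : MvPolynomial (Fin n) k) ∈ J →
      ∃ t, 0 < t ∧ (monomial (Finsupp.single mi t) (1:k) : MvPolynomial (Fin n) k) ∈ J := by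
    intro N
    induction N with
    | zero =>
      intro dd mi hms hsupp hm hmem
      have hz : ∀ j, j ≠ mi → dd j = 0 := by
        intro j hj
        have h1 : dd j ≤ ∑ i ∈ Finset.univ.erase mi, dd i :=
          Finset.single_le_sum (f := fun i => dd i) (fun _ _ => Nat.zero_le _)
            (Finset.mem_erase.2 ⟨hj, Finset.mem_univ _⟩)
        omega
      have hdd : dd = Finsupp.single mi (dd mi) := by
        ext i
        rcases eq_or_ne i mi with rfl | h
        · simp
        · rw [Finsupp.single_apply, if_neg (fun hh => h hh.symm)]
          exact hz i h
      exact ⟨dd mi, Nat.pos_of_ne_zero hm, by rw [← hdd]; exact hmem⟩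
    | succ N ih =>
      intro dd mi hms hsupp hm hmem
      by_cases hz : ∀ j, j ≠ mi → dd j = 0
      · have hdd : dd = Finsupp.single mi (dd mi) := by
          ext i
          rcases eq_or_ne i mi with rfl | h
          · simp
          · rw [Finsupp.single_apply, if_neg (fun hh => h hh.symm)]
            exact hz i h
        exact ⟨dd mi, Nat.pos_of_ne_zero hm, by rw [← hdd]; exact hmem⟩
      · push_neg at hz
        obtain ⟨j, hjne, hjnz⟩ := hz
        have hmj : mi < j := lt_of_le_of_ne (hsupp j hjnz) (Ne.symm hjne)
        obtain ⟨s, hs⟩ := hBC mi j hmj dd hmem hjnz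
        set dd' : Fin n →₀ ℕ := dd + Finsupp.single mi s - Finsupp.single j 1 with hdd'
        have happ : ∀ i, dd' i = dd i + (if mi = i then s else 0) - (if j = i then 1 else 0) := by
          intro i
          rw [hdd', Finsupp.tsub_apply, Finsupp.add_apply, Finsupp.single_apply,
            Finsupp.single_apply]
        refine ih dd' mi ?_ ?_ ?_ hs
        · have hsub : ∀ i ∈ Finset.univ.erase mi,
              (if j = i then 1 else 0) ≤ dd i + (if mi = i then s else 0) := by
            intro i _
            rcases eq_or_ne j i with rfl | h
            · rw [if_pos rfl]
              omega
            · rw [if_neg h]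
              omega
          have e1 : ∑ i ∈ Finset.univ.erase mi, dd' i
              = (∑ i ∈ Finset.univ.erase mi, (dd i + (if mi = i then s else 0)))
                - (∑ i ∈ Finset.univ.erase mi, (if j = i then 1 else 0)) := by
            rw [← Finset.sum_tsub_distrib _ hsub]
            exact Finset.sum_congr rfl fun i _ => happ i
          have e2 : ∑ i ∈ Finset.univ.erase mi, (if j = i then 1 else 0) = 1 := by
            rw [Finset.sum_eq_single j]
            · simp
            · intro b _ hb
              rw [if_neg (fun hh => hb hh.symm)]
            · intro habs
              exact absurd (Finset.mem_erase.2 ⟨hjne, Finset.mem_univ _⟩) habs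
          have e3 : ∑ i ∈ Finset.univ.erase mi, (dd i + (if mi = i then s else 0))
              = ∑ i ∈ Finset.univ.erase mi, dd i := by
            refine Finset.sum_congr rfl fun i hi => ?_
            rw [if_neg (fun hh => (Finset.mem_erase.1 hi).1 hh.symm)]
            omega
          rw [e1, e2, e3]
          omega
        · intro i hne0
          rcases eq_or_ne i mi with rfl | h
          · exact le_rfl
          · refine hsupp i ?_
            by_contra hcon
            rw [happ i, hcon, if_neg (fun hh => h hh.symm)] at hne0
            simp at hne0
        · rw [happ mi, if_pos rfl, if_neg (ne_of_gt hmj)]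
          omega
  -- Lemma B : pure powers propagate downwards
  have lemB : ∀ (b : ℕ) (i j : Fin n), i < j → ∀ aa : ℕ,
      (monomial (Finsupp.single i aa + Finsupp.single j b) (1:k) : MvPolynomial (Fin n) k) ∈ J →
      ∃ s, (monomial (Finsupp.single i s) (1:k) : MvPolynomial (Fin n) k) ∈ J := by
    intro b
    induction b with
    | zero =>
      intro i j hij aa hmem
      exact ⟨aa, by simpa using hmem⟩
    | succ b ih =>
      intro i j hij aa hmem
      have hne : i ≠ j := ne_of_lt hij
      have hj : (Finsupp.single i aa + Finsupp.single j (b+1)) j ≠ 0 := by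
        rw [Finsupp.add_apply, Finsupp.single_apply, Finsupp.single_apply,
          if_neg hne, if_pos rfl]
        omega
      obtain ⟨s, hs⟩ := hBC i j hij _ hmem hj
      have heq : Finsupp.single i aa + Finsupp.single j (b+1) + Finsupp.single i s
          - Finsupp.single j 1 = Finsupp.single i (aa + s) + Finsupp.single j b := by
        ext t
        rw [Finsupp.tsub_apply, Finsupp.add_apply, Finsupp.add_apply, Finsupp.add_apply]
        simp only [Finsupp.single_apply]
        by_cases h1 : i = t <;> by_cases h2 : j = t
        · exact absurd (h1.trans h2.symm) hne
        · simp [h1, h2]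
        · simp [h1, h2]
        · simp [h1, h2]
      rw [heq] at hs
      exact ih i j hij (aa + s) hs
  -- the set of variables with a pure power in J
  set Af : Finset (Fin n) := Finset.univ.filter
    (fun i => ∃ e, 0 < e ∧ (X i : MvPolynomial (Fin n) k) ^ e ∈ J) with hAf
  have hA_iff : ∀ i : Fin n, i ∈ Af ↔
      ∃ e, 0 < e ∧ (X i : MvPolynomial (Fin n) k) ^ e ∈ J := by
    intro i
    rw [hAf]
    simp
  set c : ℕ := Af.card with hc
  have hcn : c ≤ n := by
    rw [hc]
    have := Finset.card_le_univ Af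
    simpa using this
  have hdown : ∀ i j : Fin n, i < j → j ∈ Af → i ∈ Af := by
    intro i j hij hjA
    obtain ⟨e, he0, hmem⟩ := (hA_iff j).1 hjA
    rw [X_pow_eq_monomial] at hmem
    have hmem' : (monomial (Finsupp.single i 0 + Finsupp.single j e) (1:k)
        : MvPolynomial (Fin n) k) ∈ J := by
      simpa using hmem
    obtain ⟨s, hs⟩ := lemB e i j hij 0 hmem'
    have hs0 : s ≠ 0 := by
      intro h
      rw [h] at hs
      simp at hs
      exact hone hs
    refine (hA_iff i).2 ⟨s, Nat.pos_of_ne_zero hs0, ?_⟩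
    rwa [X_pow_eq_monomial]
  -- Af is the initial segment of length c
  have hseg : ∀ i : Fin n, i ∈ Af ↔ (i : ℕ) < c := by
    have hsub : Af ⊆ Finset.univ.filter (fun i : Fin n => (i : ℕ) < c) := by
      intro i hi
      have hIic : Finset.Iic i ⊆ Af := by
        intro t ht
        rcases eq_or_lt_of_le (Finset.mem_Iic.1 ht) with rfl | h
        · exact hi
        · exact hdown t i h hi
      have hcard := Finset.card_le_card hIic
      rw [Fin.card_Iic] at hcard
      simp only [Finset.mem_filter, Finset.mem_univ, true_and]
      omega
    have hcardF : (Finset.univ.filter (fun i : Fin n => (i : ℕ) < c)).card = c := by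
      have himg : (Finset.univ.filter (fun i : Fin n => (i : ℕ) < c)).image Fin.val
          = Finset.range c := by
        ext x
        simp only [Finset.mem_image, Finset.mem_filter, Finset.mem_univ, true_and,
          Finset.mem_range]
        constructor
        · rintro ⟨i, hi, rfl⟩
          exact hi
        · intro hx
          exact ⟨⟨x, by omega⟩, hx, rfl⟩
      rw [← Finset.card_image_of_injective _ Fin.val_injective, himg, Finset.card_range]
    have hEq : Af = Finset.univ.filter (fun i : Fin n => (i : ℕ) < c) := by
      refine Finset.eq_of_subset_of_card_le hsub ?_
      rw [hcardF, ← hc]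
    intro i
    rw [hEq]
    simp
  -- J is contained in the prime Pvar k n c
  have hPprime : (Pvar k n c).IsPrime := Pvar_isPrime n c hcn
  have hJP : J ≤ Pvar k n c := by
    rw [hG, Ideal.span_le]
    rintro - ⟨g, hgG, rfl⟩
    have hgJ : (monomial g (1:k) : MvPolynomial (Fin n) k) ∈ J :=
      hG ▸ Ideal.subset_span ⟨g, hgG, rfl⟩
    have hg0 : g ≠ 0 := by
      intro h
      rw [h] at hgJ
      simp at hgJ
      exact hone hgJ
    have hsn : g.support.Nonempty := Finsupp.support_nonempty_iff.2 hg0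
    set mi := g.support.min' hsn with hmi
    have hmimem : g mi ≠ 0 := Finsupp.mem_support_iff.1 (g.support.min'_mem hsn)
    obtain ⟨t, ht0, htmem⟩ := lemA (∑ i ∈ Finset.univ.erase mi, g i) g mi le_rfl
      (fun i hi => g.support.min'_le i (Finsupp.mem_support_iff.2 hi)) hmimem hgJ
    have hmiA : mi ∈ Af := (hA_iff mi).2 ⟨t, ht0, by rwa [X_pow_eq_monomial]⟩
    have hmic : (mi : ℕ) < c := (hseg mi).1 hmiA
    have hXmi : (X mi : MvPolynomial (Fin n) k) ∈ Pvar k n c :=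
      (X_mem_Pvar_iff n c hcn mi).2 hmic
    have hle : Finsupp.single mi 1 ≤ g := by
      rw [Finsupp.single_le_iff]
      omega
    have hfact : (monomial g (1:k) : MvPolynomial (Fin n) k)
        = X mi * monomial (g - Finsupp.single mi 1) 1 := by
      rw [show (X mi : MvPolynomial (Fin n) k) = monomial (Finsupp.single mi 1) 1 by
          rw [← X_pow_eq_monomial, pow_one]]
      rw [monomial_mul, one_mul, add_tsub_cancel_of_le hle]
    show (monomial g (1:k) : MvPolynomial (Fin n) k) ∈ Pvar k n c
    rw [hfact]
    exact Ideal.mul_mem_right _ _ hXmi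
  -- the radical of J
  have hrad : J.radical = Pvar k n c := by
    apply le_antisymm
    · exact (Ideal.IsPrime.radical_le_iff hPprime).2 hJP
    · rw [Pvar, Ideal.span_le]
      rintro - ⟨i, hi, rfl⟩
      simp only [Set.mem_setOf_eq] at hi
      obtain ⟨e, he0, hee⟩ := (hA_iff i).1 ((hseg i).2 hi)
      show (X i : MvPolynomial (Fin n) k) ∈ J.radical
      exact Ideal.mem_radical_iff.2 ⟨e, hee⟩
  -- dimension computation
  have hdim : qdim J = ((n - c : ℕ) : WithBot (WithTop ℕ)) := by
    rw [Paper.qdim, ringKrullDim_quot_eq_of_radical_eq J (Pvar k n c) hPprime hrad,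
      quot_Pvar_equiv n c hcn, ringKrullDim_mvPolynomial_fin]
  have hdnc : d = n - c := by
    rw [hd] at hdim
    exact_mod_cast hdim
  have hcd : n - d = c := by omega
  rw [hcd]
  constructor
  · intro i
    rw [hrad]
    exact X_mem_Pvar_iff n c hcn i
  · intro i
    rw [← hseg i, hA_iff i]
end
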